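/- arXiv:2211.03435 — 4 statements merged into one kernel-verified Lean document; each statement's English description precedes it below -/
import Mathlib

section
/- For all x > 0 and τ > 0, |K_{iτ}(x)| ≤ π √(τ / (x · sinh(πτ))). -/
open Real MeasureTheory

open Set Filter Complex

lemma one_add_sq_div_two_le_cosh (t : ℝ) : 1 + t^2/2 ≤ Real.cosh t := by
  wlog ht : 0 ≤ t with H
  · have := H (-t) (by linarith)
    simpa using this
  have h1 : t/2 ≤ Real.sinh (t/2) := Real.self_le_sinh_iff.2 (by linarith)
  have h2 : Real.cosh t = 1 + 2 * Real.sinh (t/2) ^ 2 := by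
    have h3 : Real.cosh (2 * (t/2)) = Real.cosh (t/2)^2 + Real.sinh (t/2)^2 :=
      Real.cosh_two_mul _
    rw [show (2:ℝ) * (t/2) = t by ring] at h3
    nlinarith [Real.cosh_sq (t/2)]
  nlinarith [Real.sinh_nonneg_iff.2 (by linarith : (0:ℝ) ≤ t/2)]

noncomputable def fC (x τ : ℝ) (z : ℂ) : ℂ :=
  Complex.exp (-(x:ℂ) * Complex.cosh z + (τ:ℂ) * Complex.I * z)

lemma coshC_eq (t s : ℝ) : Complex.cosh ((t:ℂ) + (s:ℂ)*Complex.I)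
    = (Real.cosh t * Real.cos s : ℝ) + (Real.sinh t * Real.sin s : ℝ) * Complex.I := by
  rw [Complex.cosh_add, Complex.cosh_mul_I, Complex.sinh_mul_I]
  push_cast
  ring

lemma sinhC_eq (t s : ℝ) : Complex.sinh ((t:ℂ) + (s:ℂ)*Complex.I)
    = (Real.sinh t * Real.cos s : ℝ) + (Real.cosh t * Real.sin s : ℝ) * Complex.I := by
  rw [Complex.sinh_add, Complex.cosh_mul_I, Complex.sinh_mul_I]
  push_cast
  ring

lemma norm_fC (x τ t s : ℝ) :
    ‖fC x τ ((t:ℂ) + (s:ℂ)*Complex.I)‖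
      = Real.exp (-(x * Real.cos s) * Real.cosh t - τ * s) := by
  rw [fC, Complex.norm_exp]
  congr 1
  rw [coshC_eq]
  simp [Complex.add_re, Complex.mul_re, Complex.mul_im, Complex.cos_ofReal_re]
  ring

lemma norm_sinhC_le (t s : ℝ) : ‖Complex.sinh ((t:ℂ) + (s:ℂ)*Complex.I)‖ ≤ Real.cosh t := by
  rw [sinhC_eq]
  have h : ‖((Real.sinh t * Real.cos s : ℝ) + (Real.cosh t * Real.sin s : ℝ) * Complex.I)‖
      = Real.sqrt ((Real.sinh t * Real.cos s)^2 + (Real.cosh t * Real.sin s)^2) := by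
    rw [Complex.norm_def, Complex.normSq_add_mul_I]
  rw [h]
  have h1 : Real.sinh t ^2 ≤ Real.cosh t ^2 := by nlinarith [Real.cosh_sq_sub_sinh_sq t]
  have h2 : (Real.sinh t * Real.cos s)^2 + (Real.cosh t * Real.sin s)^2 ≤ (Real.cosh t)^2 := by
    nlinarith [Real.sin_sq_add_cos_sq s, Real.sin_sq_le_one s, Real.cos_sq_le_one s,
      sq_nonneg (Real.sinh t), sq_nonneg (Real.cosh t)]
  calc Real.sqrt ((Real.sinh t * Real.cos s)^2 + (Real.cosh t * Real.sin s)^2)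
      ≤ Real.sqrt ((Real.cosh t)^2) := Real.sqrt_le_sqrt h2
    _ = Real.cosh t := Real.sqrt_sq (Real.cosh_pos t).le

lemma integrable_exp_cosh {c : ℝ} (hc : 0 < c) :
    Integrable (fun t : ℝ => Real.exp (-c * Real.cosh t)) := by
  apply Integrable.mono' ((integrable_exp_neg_mul_sq (by linarith : (0:ℝ) < c/2)).const_mul
    (Real.exp (-c)))
  · exact (Real.continuous_exp.comp (continuous_const.mul Real.continuous_cosh)).aestronglyMeasurable
  · filter_upwards with t
    rw [Real.norm_eq_abs, Real.abs_exp, ← Real.exp_add]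
    apply Real.exp_le_exp.2
    have := one_add_sq_div_two_le_cosh t
    nlinarith

lemma K0_integral_bound {y : ℝ} (hy : 0 < y) :
    ∫ t in Set.Ioi (0:ℝ), Real.exp (-y * Real.cosh t)
      ≤ Real.exp (-y) * Real.sqrt (π / (2*y)) := by
  have h1 : ∫ t in Set.Ioi (0:ℝ), Real.exp (-y * Real.cosh t)
      ≤ ∫ t in Set.Ioi (0:ℝ), Real.exp (-y) * Real.exp (-(y/2) * t^2) := by
    apply setIntegral_mono_on
    · exact (integrable_exp_cosh hy).integrableOn
    · exact (((integrable_exp_neg_mul_sq (by linarith : (0:ℝ) < y/2)).const_mul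
        (Real.exp (-y)))).integrableOn
    · exact measurableSet_Ioi
    · intro t _
      rw [← Real.exp_add]
      apply Real.exp_le_exp.2
      have := one_add_sq_div_two_le_cosh t
      nlinarith
  rw [integral_const_mul, integral_gaussian_Ioi] at h1
  refine h1.trans ?_
  apply mul_le_mul_of_nonneg_left _ (Real.exp_pos _).le
  rw [show π / (y/2) = 4 * (π/(2*y)) by ring, Real.sqrt_mul (by norm_num : (0:ℝ) ≤ 4),
    show Real.sqrt 4 = 2 by rw [show (4:ℝ) = 2^2 by norm_num, Real.sqrt_sq (by norm_num : (0:ℝ) ≤ 2)]]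
  ring_nf
  exact le_refl _

lemma hasDerivAt_fC (x τ : ℝ) (z : ℂ) :
    HasDerivAt (fC x τ) ((-(x:ℂ) * Complex.sinh z + (τ:ℂ)*Complex.I) * fC x τ z) z := by
  have h1 : HasDerivAt (fun z : ℂ => -(x:ℂ) * Complex.cosh z + (τ:ℂ)*Complex.I*z)
      (-(x:ℂ) * Complex.sinh z + (τ:ℂ)*Complex.I) z := by
    have h2 : HasDerivAt (fun y : ℂ => -(x:ℂ) * Complex.cosh y + (τ:ℂ)*Complex.I * id y)
        (-(x:ℂ) * Complex.sinh z + (τ:ℂ)*Complex.I * 1) z :=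
      ((Complex.hasDerivAt_cosh z).const_mul (-(x:ℂ))).add
      ((hasDerivAt_id z).const_mul ((τ:ℂ)*Complex.I))
    simpa using h2
  have h2 := h1.cexp
  rw [show (-(x:ℂ) * Complex.sinh z + (τ:ℂ)*Complex.I) * fC x τ z
      = fC x τ z * (-(x:ℂ) * Complex.sinh z + (τ:ℂ)*Complex.I) from mul_comm _ _]
  exact h2

lemma norm_deriv_bound (x τ : ℝ) (hx : 0 < x) (hτ : 0 < τ) {c : ℝ} (hc : 0 < c) {u : ℝ}
    (hcu : c ≤ Real.cos u) (hu : -2 ≤ u) (t : ℝ) :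
    ‖(-(x:ℂ) * Complex.sinh ((t:ℂ)+(u:ℂ)*Complex.I) + (τ:ℂ)*Complex.I)
        * fC x τ ((t:ℂ)+(u:ℂ)*Complex.I)‖
      ≤ (Real.exp (2*τ) * (2/c + τ)) * Real.exp (-(x*c/2) * Real.cosh t) := by
  rw [norm_mul, norm_fC]
  have h1 : ‖-(x:ℂ) * Complex.sinh ((t:ℂ)+(u:ℂ)*Complex.I) + (τ:ℂ)*Complex.I‖
      ≤ x * Real.cosh t + τ := by
    refine (norm_add_le _ _).trans ?_
    rw [norm_mul]
    have := norm_sinhC_le t u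
    have h2 : ‖(-(x:ℂ))‖ = x := by
      rw [norm_neg, Complex.norm_real, Real.norm_eq_abs, abs_of_pos hx]
    have h3 : ‖(τ:ℂ)*Complex.I‖ = τ := by
      rw [norm_mul, Complex.norm_I, Complex.norm_real, Real.norm_eq_abs, abs_of_pos hτ, mul_one]
    rw [h2, h3]
    gcongr
  have hch := Real.one_le_cosh t
  have hexp_le : Real.exp (-(x * Real.cos u) * Real.cosh t - τ * u)
      ≤ Real.exp (2*τ) * Real.exp (-(x*c) * Real.cosh t) := by
    rw [← Real.exp_add]
    apply Real.exp_le_exp.2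
    have : x * c * Real.cosh t ≤ x * Real.cos u * Real.cosh t := by
      gcongr
    nlinarith
  calc ‖-(x:ℂ) * Complex.sinh ((t:ℂ)+(u:ℂ)*Complex.I) + (τ:ℂ)*Complex.I‖
        * Real.exp (-(x * Real.cos u) * Real.cosh t - τ * u)
      ≤ (x * Real.cosh t + τ) * (Real.exp (2*τ) * Real.exp (-(x*c) * Real.cosh t)) := by
        apply mul_le_mul h1 hexp_le (Real.exp_pos _).le (by positivity)
    _ ≤ (Real.exp (2*τ) * (2/c + τ)) * Real.exp (-(x*c/2) * Real.cosh t) := by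
        have key : (x * Real.cosh t + τ) * Real.exp (-(x*c) * Real.cosh t)
            ≤ (2/c + τ) * Real.exp (-(x*c/2) * Real.cosh t) := by
          have e1 : Real.exp (-(x*c) * Real.cosh t)
              = Real.exp (-(x*c/2) * Real.cosh t) * Real.exp (-(x*c/2) * Real.cosh t) := by
            rw [← Real.exp_add]; ring_nf
          rw [e1, ← mul_assoc]
          apply mul_le_mul_of_nonneg_right _ (Real.exp_pos _).le
          have h5 : x * Real.cosh t * Real.exp (-(x*c/2) * Real.cosh t) ≤ 2/c := by
            have hu2 : (0:ℝ) < x*c/2 * Real.cosh t := by positivity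
            have h6 : x*c/2 * Real.cosh t ≤ Real.exp (x*c/2 * Real.cosh t) := by
              nlinarith [Real.add_one_le_exp (x*c/2 * Real.cosh t)]
            rw [show -(x*c/2) * Real.cosh t = -(x*c/2 * Real.cosh t) by ring, Real.exp_neg]
            rw [mul_inv_le_iff₀ (Real.exp_pos _)]
            calc x * Real.cosh t = (2/c) * (x*c/2*Real.cosh t) := by field_simp
              _ ≤ (2/c) * Real.exp (x*c/2 * Real.cosh t) := by gcongr
          have h70 : -(x*c/2) * Real.cosh t ≤ 0 := by
            have h71 : 0 ≤ (x*c/2) * Real.cosh t := by positivity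
            nlinarith
          have h7 : τ * Real.exp (-(x*c/2) * Real.cosh t) ≤ τ := by
            nlinarith [Real.exp_le_one_iff.2 h70, Real.exp_pos (-(x*c/2) * Real.cosh t)]
          nlinarith [Real.exp_pos (-(x*c/2) * Real.cosh t)]
        nlinarith [Real.exp_pos (2*τ), Real.exp_pos (-(x*c/2) * Real.cosh t),
          Real.exp_pos (-(x*c) * Real.cosh t), mul_le_mul_of_nonneg_left key (Real.exp_pos (2*τ)).le]

lemma continuous_fC_line (x τ u : ℝ) :
    Continuous (fun t : ℝ => fC x τ ((t:ℂ)+(u:ℂ)*Complex.I)) := by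
  unfold fC
  fun_prop

lemma integrable_fC_line (x τ : ℝ) (hx : 0 < x) {u : ℝ} (hcu : 0 < Real.cos u) :
    Integrable (fun t : ℝ => fC x τ ((t:ℂ)+(u:ℂ)*Complex.I)) := by
  apply Integrable.mono' ((integrable_exp_cosh (mul_pos hx hcu)).const_mul (Real.exp (-(τ*u))))
  · exact (continuous_fC_line x τ u).aestronglyMeasurable
  · filter_upwards with t
    rw [norm_fC, ← Real.exp_add]
    apply le_of_eq
    congr 1
    ring

lemma integrable_deriv_line (x τ : ℝ) (hx : 0 < x) (hτ : 0 < τ) {u : ℝ}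
    (hcu : 0 < Real.cos u) (hu : -2 ≤ u) :
    Integrable (fun t : ℝ => (-(x:ℂ) * Complex.sinh ((t:ℂ)+(u:ℂ)*Complex.I) + (τ:ℂ)*Complex.I)
      * fC x τ ((t:ℂ)+(u:ℂ)*Complex.I)) := by
  apply Integrable.mono' ((integrable_exp_cosh (by positivity : (0:ℝ) < x * Real.cos u / 2)).const_mul
    (Real.exp (2*τ) * (2/Real.cos u + τ)))
  · apply Continuous.aestronglyMeasurable
    apply Continuous.mul _ (continuous_fC_line x τ u)
    fun_prop
  · filter_upwards with t
    have := norm_deriv_bound x τ hx hτ hcu (le_refl (Real.cos u)) hu t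
    convert this using 3


lemma tendsto_exp_line_top {A b : ℝ} (hb : 0 < b) :
    Filter.Tendsto (fun t : ℝ => A * Real.exp (-(b*t))) atTop (nhds 0) := by
  have t1 : Filter.Tendsto (fun t:ℝ => b*t) atTop atTop :=
    (tendsto_const_mul_atTop_of_pos hb).2 tendsto_id
  have t2 := Real.tendsto_exp_atBot.comp (tendsto_neg_atTop_atBot.comp t1)
  simpa using t2.const_mul A

lemma tendsto_exp_line_bot {A b : ℝ} (hb : 0 < b) :
    Filter.Tendsto (fun t : ℝ => A * Real.exp (b*t)) atBot (nhds 0) := by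
  have t1 : Filter.Tendsto (fun t:ℝ => b*t) atBot atBot :=
    (tendsto_const_mul_atBot_of_pos hb).2 tendsto_id
  have t2 := Real.tendsto_exp_atBot.comp t1
  simpa using t2.const_mul A

lemma hasDerivAt_g (x τ u : ℝ) (t : ℝ) :
    HasDerivAt (fun t : ℝ => fC x τ ((t:ℂ)+(u:ℂ)*Complex.I))
      ((-(x:ℂ) * Complex.sinh ((t:ℂ)+(u:ℂ)*Complex.I) + (τ:ℂ)*Complex.I)
        * fC x τ ((t:ℂ)+(u:ℂ)*Complex.I)) t := by
  have h0 : HasDerivAt (fun z : ℂ => fC x τ (z + (u:ℂ)*Complex.I))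
      ((-(x:ℂ) * Complex.sinh ((t:ℂ)+(u:ℂ)*Complex.I) + (τ:ℂ)*Complex.I)
        * fC x τ ((t:ℂ)+(u:ℂ)*Complex.I)) (t:ℂ) := by
    have h1 := (hasDerivAt_fC x τ ((t:ℂ)+(u:ℂ)*Complex.I)).comp (t:ℂ)
      ((hasDerivAt_id (t:ℂ)).add_const ((u:ℂ)*Complex.I))
    simpa [Function.comp_def] using h1
  exact h0.comp_ofReal

lemma integral_deriv_zero (x τ : ℝ) (hx : 0 < x) (hτ : 0 < τ) {u : ℝ}
    (hcu : 0 < Real.cos u) (hu : -2 ≤ u) :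
    ∫ t : ℝ, (-(x:ℂ) * Complex.sinh ((t:ℂ)+(u:ℂ)*Complex.I) + (τ:ℂ)*Complex.I)
      * fC x τ ((t:ℂ)+(u:ℂ)*Complex.I) = 0 := by
  set g := fun t : ℝ => fC x τ ((t:ℂ)+(u:ℂ)*Complex.I) with hg_def
  set w := fun t : ℝ => (-(x:ℂ) * Complex.sinh ((t:ℂ)+(u:ℂ)*Complex.I) + (τ:ℂ)*Complex.I)
      * fC x τ ((t:ℂ)+(u:ℂ)*Complex.I) with hw_def
  have hb : (0:ℝ) < x * Real.cos u := mul_pos hx hcu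
  have htop : Filter.Tendsto g atTop (nhds 0) := by
    apply squeeze_zero_norm (f := g) (a := fun t => Real.exp (-(τ*u)) * Real.exp (-(x * Real.cos u * t))) _ (tendsto_exp_line_top hb)
    intro t
    rw [hg_def, norm_fC]
    simp only [← Real.exp_add]
    apply Real.exp_le_exp.2
    have h1 : (t:ℝ) ≤ Real.cosh t := by nlinarith [one_add_sq_div_two_le_cosh t, sq_nonneg (t-1)]
    nlinarith
  have hbot : Filter.Tendsto g atBot (nhds 0) := by
    apply squeeze_zero_norm (f := g) (a := fun t => Real.exp (-(τ*u)) * Real.exp (x * Real.cos u * t)) _ (tendsto_exp_line_bot hb)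
    intro t
    rw [hg_def, norm_fC]
    simp only [← Real.exp_add]
    apply Real.exp_le_exp.2
    have h1 : (-t:ℝ) ≤ Real.cosh t := by
      nlinarith [one_add_sq_div_two_le_cosh t, sq_nonneg (t+1)]
    nlinarith
  have hint := integrable_deriv_line x τ hx hτ hcu hu
  have i1 : IntegrableOn w (Iic (0:ℝ)) := hint.integrableOn
  have i2 : IntegrableOn w (Ioi (0:ℝ)) := hint.integrableOn
  have e1 : ∫ t in Iic (0:ℝ), w t = g 0 - 0 :=
    integral_Iic_of_hasDerivAt_of_tendsto' (fun t _ => hasDerivAt_g x τ u t) i1 hbot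
  have e2 : ∫ t in Ioi (0:ℝ), w t = 0 - g 0 :=
    integral_Ioi_of_hasDerivAt_of_tendsto' (fun t _ => hasDerivAt_g x τ u t) i2 htop
  rw [← intervalIntegral.integral_Iic_add_Ioi i1 i2, e1, e2]
  ring

set_option maxHeartbeats 2000000 in
lemma vertical_const (x τ : ℝ) (hx : 0 < x) (hτ : 0 < τ) {s : ℝ} (hs0 : 0 ≤ s) (hs : s < π/2) :
    ∫ t : ℝ, fC x τ ((t:ℂ) + (s:ℂ)*Complex.I)
      = ∫ t : ℝ, fC x τ ((t:ℂ) + ((0:ℝ):ℂ)*Complex.I) := by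
  have hπ := Real.pi_pos
  set s₁ := (s + π/2)/2 with hs₁_def
  have hs₁a : s < s₁ := by rw [hs₁_def]; linarith
  have hs₁b : s₁ < π/2 := by rw [hs₁_def]; linarith
  have hs₁pos : 0 < s₁ := by rw [hs₁_def]; linarith
  set c := Real.cos s₁ with hc_def
  have hc : 0 < c := Real.cos_pos_of_mem_Ioo ⟨by linarith, hs₁b⟩
  set ε := s₁ - s with hε_def
  have hε : 0 < ε := by rw [hε_def]; linarith
  have hcos : ∀ σ ∈ Icc (0:ℝ) s, ∀ u ∈ Metric.ball σ ε, c ≤ Real.cos u ∧ -2 ≤ u := by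
    intro σ hσ u hu
    have habs : |u - σ| < ε := by simpa [Real.dist_eq] using hu
    have h1 := abs_lt.1 habs
    have hu1 : u < s₁ := by have := hσ.2; linarith [h1.2]
    have hu2 : -s₁ < u := by have := hσ.1; rw [hε_def] at h1; linarith [h1.1]
    have habs2 : |u| ≤ s₁ := by rw [abs_le]; constructor <;> linarith
    have h4 : π < 4 := by linarith [Real.pi_lt_d2]
    constructor
    · rw [← Real.cos_abs u, hc_def]
      exact Real.cos_le_cos_of_nonneg_of_le_pi (abs_nonneg u) (by linarith) habs2
    · linarith
  have key : ∀ σ ∈ Icc (0:ℝ) s,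
      HasDerivAt (fun r : ℝ => ∫ t : ℝ, fC x τ ((t:ℂ) + (r:ℂ)*Complex.I)) 0 σ := by
    intro σ hσ
    have hσball : σ ∈ Metric.ball σ ε := Metric.mem_ball_self hε
    have hcosσ := (hcos σ hσ σ hσball).1
    have hcosσ' : 0 < Real.cos σ := lt_of_lt_of_le hc hcosσ
    have hmeas : ∀ᶠ (r : ℝ) in nhds σ, AEStronglyMeasurable
        (fun t : ℝ => fC x τ ((t:ℂ) + (r:ℂ)*Complex.I)) volume :=
      by filter_upwards with r
         exact (continuous_fC_line x τ r).aestronglyMeasurable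
    have hint : Integrable (fun t : ℝ => fC x τ ((t:ℂ) + (σ:ℂ)*Complex.I)) volume :=
      integrable_fC_line x τ hx hcosσ'
    have hmeas' : AEStronglyMeasurable (fun t : ℝ => Complex.I
        * ((-(x:ℂ) * Complex.sinh ((t:ℂ)+(σ:ℂ)*Complex.I)
        + (τ:ℂ)*Complex.I) * fC x τ ((t:ℂ)+(σ:ℂ)*Complex.I))) volume := by
      apply Continuous.aestronglyMeasurable
      apply continuous_const.mul
      apply Continuous.mul _ (continuous_fC_line x τ σ)
      fun_prop
    have hbnd : ∀ᵐ t : ℝ ∂volume, ∀ u ∈ Metric.ball σ ε,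
        ‖Complex.I * ((-(x:ℂ) * Complex.sinh ((t:ℂ)+(u:ℂ)*Complex.I)
          + (τ:ℂ)*Complex.I) * fC x τ ((t:ℂ)+(u:ℂ)*Complex.I))‖
        ≤ Real.exp (2*τ) * (2/c + τ) * Real.exp (-(x*c/2) * Real.cosh t) := by
      filter_upwards with t u hu
      rw [norm_mul, Complex.norm_I, one_mul]
      exact norm_deriv_bound x τ hx hτ hc (hcos σ hσ u hu).1 (hcos σ hσ u hu).2 t
    have hbint : Integrable (fun t : ℝ => Real.exp (2*τ) * (2/c + τ)
        * Real.exp (-(x*c/2) * Real.cosh t)) volume := by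
      simpa [mul_assoc] using
        ((integrable_exp_cosh (by positivity : (0:ℝ) < x*c/2)).const_mul
          (Real.exp (2*τ) * (2/c + τ)))
    have hdiff : ∀ᵐ t : ℝ ∂volume, ∀ u ∈ Metric.ball σ ε,
        HasDerivAt (fun r : ℝ => fC x τ ((t:ℂ) + (r:ℂ)*Complex.I))
          (Complex.I * ((-(x:ℂ) * Complex.sinh ((t:ℂ)+(u:ℂ)*Complex.I)
          + (τ:ℂ)*Complex.I) * fC x τ ((t:ℂ)+(u:ℂ)*Complex.I))) u := by
      filter_upwards with t u hu
      have hz : HasDerivAt (fun r:ℝ => (t:ℂ) + (r:ℂ)*Complex.I) Complex.I u := by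
        simpa using ((Complex.ofRealCLM.hasDerivAt (x := u)).mul_const Complex.I).const_add (t:ℂ)
      have hf := hasDerivAt_fC x τ ((t:ℂ)+(u:ℂ)*Complex.I)
      have := hf.scomp u hz
      simpa [smul_eq_mul, Function.comp_def] using this
    obtain ⟨hFi, hd⟩ := hasDerivAt_integral_of_dominated_loc_of_deriv_le (Metric.ball_mem_nhds σ hε)
      hmeas hint hmeas' hbnd hbint hdiff
    have hzero : (∫ t : ℝ, Complex.I * ((-(x:ℂ) * Complex.sinh ((t:ℂ)+(σ:ℂ)*Complex.I)
        + (τ:ℂ)*Complex.I) * fC x τ ((t:ℂ)+(σ:ℂ)*Complex.I))) = 0 := by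
      rw [integral_const_mul, integral_deriv_zero x τ hx hτ hcosσ' (hcos σ hσ σ hσball).2, mul_zero]
    rwa [hzero] at hd
  have hcont : ContinuousOn (fun r : ℝ => ∫ t : ℝ, fC x τ ((t:ℂ) + (r:ℂ)*Complex.I)) (Icc 0 s) :=
    fun σ hσ => (key σ hσ).continuousAt.continuousWithinAt
  have := constant_of_has_deriv_right_zero hcont
    (fun σ hσ => (key σ (Ico_subset_Icc_self hσ)).hasDerivWithinAt) s (right_mem_Icc.2 hs0)
  exact this

/-- Macdonald function with purely imaginary index. -/
noncomputable def Kit (τ x : ℝ) : ℝ :=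
  ∫ t in Set.Ioi (0:ℝ), Real.exp (-x * Real.cosh t) * Real.cos (τ * t)

lemma integrable_g (x τ : ℝ) (hx : 0 < x) :
    Integrable (fun t : ℝ => Real.exp (-x * Real.cosh t) * Real.cos (τ * t)) := by
  apply Integrable.mono' (integrable_exp_cosh hx)
  · exact ((Real.continuous_exp.comp (continuous_const.mul Real.continuous_cosh)).mul
      (Real.continuous_cos.comp (continuous_const.mul continuous_id))).aestronglyMeasurable
  · filter_upwards with t
    rw [Real.norm_eq_abs, abs_mul, Real.abs_exp]
    calc Real.exp (-x * Real.cosh t) * |Real.cos (τ*t)|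
        ≤ Real.exp (-x * Real.cosh t) * 1 :=
          mul_le_mul_of_nonneg_left (Real.abs_cos_le_one _) (Real.exp_pos _).le
      _ = Real.exp (-x * Real.cosh t) := mul_one _

lemma real_int_eq (x τ : ℝ) (hx : 0 < x) :
    (∫ t : ℝ, Real.exp (-x * Real.cosh t) * Real.cos (τ * t)) = 2 * Kit τ x := by
  have hint := integrable_g x τ hx
  have h1 : (∫ t in Iic (0:ℝ), Real.exp (-x * Real.cosh t) * Real.cos (τ * t))
      = ∫ t in Ioi (0:ℝ), Real.exp (-x * Real.cosh t) * Real.cos (τ * t) := by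
    rw [show Iic (0:ℝ) = Iic (-(0:ℝ)) by norm_num,
      ← integral_comp_neg_Ioi 0 (fun t => Real.exp (-x * Real.cosh t) * Real.cos (τ * t))]
    congr 1
    ext t
    rw [Real.cosh_neg, mul_neg, Real.cos_neg]
  rw [← intervalIntegral.integral_Iic_add_Ioi hint.integrableOn hint.integrableOn, h1, Kit]
  ring

lemma int_line_even (y : ℝ) (hy : 0 < y) :
    (∫ t : ℝ, Real.exp (-y * Real.cosh t))
      = 2 * ∫ t in Ioi (0:ℝ), Real.exp (-y * Real.cosh t) := by
  have hint := integrable_exp_cosh hy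
  have h1 : (∫ t in Iic (0:ℝ), Real.exp (-y * Real.cosh t))
      = ∫ t in Ioi (0:ℝ), Real.exp (-y * Real.cosh t) := by
    rw [show Iic (0:ℝ) = Iic (-(0:ℝ)) by norm_num,
      ← integral_comp_neg_Ioi 0 (fun t => Real.exp (-y * Real.cosh t))]
    congr 1
    ext t
    rw [Real.cosh_neg]
  rw [← intervalIntegral.integral_Iic_add_Ioi hint.integrableOn hint.integrableOn, h1]
  ring

lemma Kit_re (x τ : ℝ) (hx : 0 < x) :
    (∫ t : ℝ, fC x τ ((t:ℂ) + ((0:ℝ):ℂ)*Complex.I)).re = 2 * Kit τ x := by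
  have hcs : (0:ℝ) < Real.cos 0 := by simp
  have hint : Integrable (fun t : ℝ => fC x τ ((t:ℂ) + ((0:ℝ):ℂ)*Complex.I)) :=
    integrable_fC_line x τ hx hcs
  rw [← real_int_eq x τ hx]
  have h := integral_re hint
  rw [RCLike.re_to_complex] at h
  rw [← h]
  congr 1
  ext t
  rw [RCLike.re_to_complex]
  show (fC x τ ((t:ℂ) + ((0:ℝ):ℂ)*Complex.I)).re = _
  rw [fC]
  have h0 : ((0:ℝ):ℂ) = 0 := by norm_num
  rw [h0, zero_mul, add_zero]
  rw [Complex.exp_re]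
  have hre : (-(x:ℂ) * Complex.cosh (t:ℂ) + (τ:ℂ)*Complex.I*(t:ℂ)).re = -x * Real.cosh t := by
    rw [← Complex.ofReal_cosh]
    simp [Complex.mul_re, Complex.mul_im, Complex.add_re]
  have him : (-(x:ℂ) * Complex.cosh (t:ℂ) + (τ:ℂ)*Complex.I*(t:ℂ)).im = τ * t := by
    rw [← Complex.ofReal_cosh]
    simp [Complex.mul_re, Complex.mul_im, Complex.add_im]
  rw [hre, him]

lemma Kit_key_bound (x τ : ℝ) (hx : 0 < x) (hτ : 0 < τ) {s : ℝ} (hs0 : 0 ≤ s) (hs : s < π/2) :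
    |Kit τ x| ≤ Real.exp (-(τ*s))
      * (Real.exp (-(x*Real.cos s)) * Real.sqrt (π/(2*(x*Real.cos s)))) := by
  have hπ := Real.pi_pos
  have hcs : 0 < Real.cos s := Real.cos_pos_of_mem_Ioo ⟨by linarith, hs⟩
  have hxc : 0 < x * Real.cos s := mul_pos hx hcs
  have h1 : |2 * Kit τ x| ≤ ‖∫ t : ℝ, fC x τ ((t:ℂ) + ((0:ℝ):ℂ)*Complex.I)‖ := by
    rw [← Kit_re x τ hx]
    exact Complex.abs_re_le_norm _
  rw [← vertical_const x τ hx hτ hs0 hs] at h1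
  have h2 : ‖∫ t : ℝ, fC x τ ((t:ℂ) + (s:ℂ)*Complex.I)‖
      ≤ ∫ t : ℝ, ‖fC x τ ((t:ℂ) + (s:ℂ)*Complex.I)‖ := norm_integral_le_integral_norm _
  have h3 : (∫ t : ℝ, ‖fC x τ ((t:ℂ) + (s:ℂ)*Complex.I)‖)
      = Real.exp (-(τ*s)) * ∫ t : ℝ, Real.exp (-(x*Real.cos s) * Real.cosh t) := by
    rw [← integral_const_mul]
    congr 1
    ext t
    rw [norm_fC, ← Real.exp_add]
    congr 1
    ring
  have h4 : (∫ t : ℝ, Real.exp (-(x*Real.cos s) * Real.cosh t))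
      ≤ 2 * (Real.exp (-(x*Real.cos s)) * Real.sqrt (π/(2*(x*Real.cos s)))) := by
    rw [int_line_even _ hxc]
    have := K0_integral_bound hxc
    linarith
  have h5 : |2 * Kit τ x| ≤ Real.exp (-(τ*s))
      * (2 * (Real.exp (-(x*Real.cos s)) * Real.sqrt (π/(2*(x*Real.cos s))))) := by
    calc |2 * Kit τ x| ≤ ‖∫ t : ℝ, fC x τ ((t:ℂ) + (s:ℂ)*Complex.I)‖ := h1
      _ ≤ ∫ t : ℝ, ‖fC x τ ((t:ℂ) + (s:ℂ)*Complex.I)‖ := h2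
      _ = Real.exp (-(τ*s)) * ∫ t : ℝ, Real.exp (-(x*Real.cos s) * Real.cosh t) := h3
      _ ≤ _ := by
          apply mul_le_mul_of_nonneg_left h4 (Real.exp_pos _).le
  rw [abs_mul, show |(2:ℝ)| = 2 by norm_num] at h5
  linarith [abs_nonneg (Kit τ x)]

lemma sinh_le_two_mul {v : ℝ} (h0 : 0 ≤ v) (h1 : v ≤ 1) : Real.sinh v ≤ 2*v := by
  rw [Real.sinh_eq]
  have hA1 : 1 ≤ Real.exp v := by rw [← Real.exp_zero]; exact Real.exp_le_exp.2 h0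
  have hA3 : Real.exp v ≤ 3 := by
    calc Real.exp v ≤ Real.exp 1 := Real.exp_le_exp.2 h1
      _ ≤ 3 := by linarith [Real.exp_one_lt_d9]
  have hB : 1 - v ≤ Real.exp (-v) := by linarith [Real.add_one_le_exp (-v)]
  have hAB : Real.exp v * Real.exp (-v) = 1 := by rw [← Real.exp_add]; simp
  nlinarith [mul_nonneg (mul_nonneg (sub_nonneg.2 hA1) (sub_nonneg.2 hA3))
    (Real.exp_pos (-v)).le]

theorem stmt2 (x τ : ℝ) (hx : 0 < x) (hτ : 0 < τ) :
    |Kit τ x| ≤ Real.pi * Real.sqrt (τ / (x * Real.sinh (Real.pi * τ))) := by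
  have hπ := Real.pi_pos
  have hsinh_pos : 0 < Real.sinh (π*τ) := by
    rw [← Real.sinh_zero]
    exact Real.sinh_lt_sinh.2 (by positivity)
  rcases le_or_gt τ (1/π) with hcase | hcase
  · -- small τ : use s = 0
    have h := Kit_key_bound x τ hx hτ (le_refl (0:ℝ)) (by linarith : (0:ℝ) < π/2)
    simp only [Real.cos_zero, mul_zero, neg_zero, Real.exp_zero, one_mul, mul_one] at h
    have hL : |Kit τ x| ≤ Real.sqrt (π/(2*x)) := by
      have h2 : Real.exp (-x) ≤ 1 := Real.exp_le_one_iff.2 (by linarith)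
      nlinarith [Real.sqrt_nonneg (π/(2*x)), Real.exp_pos (-x)]
    have hv1 : π * τ ≤ 1 := by
      rw [le_div_iff₀ hπ] at hcase; linarith [mul_comm τ π]
    have hsinh : Real.sinh (π*τ) ≤ 2*(π*τ) := sinh_le_two_mul (by positivity) hv1
    have hq : π/(2*x) ≤ π^2 * (τ/(x*Real.sinh (π*τ))) := by
      rw [div_le_iff₀ (by positivity : (0:ℝ) < 2*x)]
      have e1 : π^2 * (τ/(x*Real.sinh (π*τ))) * (2*x) = 2*π^2*τ/(Real.sinh (π*τ)) := by
        field_simp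
      rw [e1, le_div_iff₀ hsinh_pos]
      nlinarith
    calc |Kit τ x| ≤ Real.sqrt (π/(2*x)) := hL
      _ ≤ Real.sqrt (π^2 * (τ/(x*Real.sinh (π*τ)))) := Real.sqrt_le_sqrt hq
      _ = π * Real.sqrt (τ/(x*Real.sinh (π*τ))) := by
          rw [Real.sqrt_mul (sq_nonneg π), Real.sqrt_sq hπ.le]
  · -- large τ : use s = π/2 - 1/(2τ)
    set s := π/2 - 1/(2*τ) with hs_def
    have h2τ : 0 < 2*τ := by linarith
    have hhalf : 0 < 1/(2*τ) := by positivity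
    have hhalf2 : 1/(2*τ) < π/2 := by
      rw [div_lt_iff₀ h2τ]
      rw [div_lt_iff₀ hπ] at hcase
      nlinarith
    have hs0 : 0 ≤ s := by rw [hs_def]; linarith
    have hs : s < π/2 := by rw [hs_def]; linarith
    have h := Kit_key_bound x τ hx hτ hs0 hs
    have hcos_eq : Real.cos s = Real.sin (1/(2*τ)) := by
      rw [hs_def, Real.cos_pi_div_two_sub]
    have hsin_ge : 1/(π*τ) ≤ Real.sin (1/(2*τ)) := by
      have := Real.mul_le_sin hhalf.le hhalf2.le
      calc 1/(π*τ) = 2/π * (1/(2*τ)) := by field_simp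
        _ ≤ Real.sin (1/(2*τ)) := this
    have hcs_pos : 0 < Real.cos s := by
      rw [hcos_eq]; exact lt_of_lt_of_le (by positivity) hsin_ge
    -- step 1 : |Kit| ≤ exp(-(τs)) * sqrt(π²τ/(2x))
    have step1 : |Kit τ x| ≤ Real.exp (-(τ*s)) * Real.sqrt (π^2*τ/(2*x)) := by
      refine h.trans ?_
      apply mul_le_mul_of_nonneg_left _ (Real.exp_pos _).le
      have e1 : Real.exp (-(x*Real.cos s)) ≤ 1 := Real.exp_le_one_iff.2 (by nlinarith)
      have e2 : Real.sqrt (π/(2*(x*Real.cos s))) ≤ Real.sqrt (π^2*τ/(2*x)) := by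
        apply Real.sqrt_le_sqrt
        rw [div_le_div_iff₀ (by positivity) (by positivity)]
        have : 1/(π*τ) ≤ Real.cos s := hcos_eq ▸ hsin_ge
        have hπτ : 0 < π*τ := by positivity
        have h3 : x/(π*τ) ≤ x * Real.cos s := by
          calc x/(π*τ) = x * (1/(π*τ)) := by ring
            _ ≤ x * Real.cos s := by gcongr
        calc π * (2*x) = π^2*τ * (2*(x/(π*τ))) := by field_simp
          _ ≤ π^2*τ * (2*(x*Real.cos s)) := by gcongr
      calc Real.exp (-(x*Real.cos s)) * Real.sqrt (π/(2*(x*Real.cos s)))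
          ≤ 1 * Real.sqrt (π^2*τ/(2*x)) :=
            mul_le_mul e1 e2 (Real.sqrt_nonneg _) zero_le_one
        _ = Real.sqrt (π^2*τ/(2*x)) := one_mul _
    -- step 2 : rewrite exp(-(τs)) = exp(1/2) * exp(-(πτ)/2)
    have hexp_eq : Real.exp (-(τ*s)) = Real.exp (1/2:ℝ) * Real.exp (-(π*τ)/2) := by
      rw [← Real.exp_add]
      congr 1
      rw [hs_def]
      field_simp
      ring
    -- step 3 : RHS lower bound
    have hsinh_le : Real.sinh (π*τ) ≤ Real.exp (π*τ) / 2 := by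
      rw [Real.sinh_eq]
      have := Real.exp_pos (-(π*τ))
      linarith
    have hq : (2*τ/x) * Real.exp (-(π*τ)) ≤ τ/(x*Real.sinh (π*τ)) := by
      have hE : Real.exp (π*τ) * Real.exp (-(π*τ)) = 1 := by rw [← Real.exp_add]; simp
      have hE2 : 0 < Real.exp (-(π*τ)) := Real.exp_pos _
      rw [show 2*τ/x * Real.exp (-(π*τ)) = (2*τ*Real.exp (-(π*τ)))/x by ring,
        div_le_div_iff₀ (by positivity) (by positivity)]
      calc 2*τ*Real.exp (-(π*τ)) * (x*Real.sinh (π*τ))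
          ≤ 2*τ*Real.exp (-(π*τ)) * (x*(Real.exp (π*τ)/2)) := by
            apply mul_le_mul_of_nonneg_left _ (by positivity)
            exact mul_le_mul_of_nonneg_left hsinh_le hx.le
        _ = τ*x*(Real.exp (π*τ) * Real.exp (-(π*τ))) := by ring
        _ = τ*x := by rw [hE, mul_one]
    -- combine
    have main : Real.exp (1/2:ℝ) * Real.exp (-(π*τ)/2) * Real.sqrt (π^2*τ/(2*x))
        ≤ π * Real.sqrt ((2*τ/x) * Real.exp (-(π*τ))) := by
      have q1 : Real.exp (1/2:ℝ) = Real.sqrt (Real.exp 1) := by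
        rw [show Real.exp 1 = Real.exp (1/2:ℝ)^2 by rw [sq, ← Real.exp_add]; norm_num]
        rw [Real.sqrt_sq (Real.exp_pos _).le]
      have q2 : Real.exp (-(π*τ)/2) = Real.sqrt (Real.exp (-(π*τ))) := by
        rw [show Real.exp (-(π*τ)) = Real.exp (-(π*τ)/2)^2 by rw [sq, ← Real.exp_add]; ring_nf]
        rw [Real.sqrt_sq (Real.exp_pos _).le]
      rw [q1, q2, ← Real.sqrt_mul (Real.exp_pos 1).le, ← Real.sqrt_mul (by positivity),
        show π * Real.sqrt ((2*τ/x) * Real.exp (-(π*τ)))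
          = Real.sqrt (π^2 * ((2*τ/x) * Real.exp (-(π*τ)))) by
            rw [Real.sqrt_mul (sq_nonneg π), Real.sqrt_sq hπ.le]]
      apply Real.sqrt_le_sqrt
      have h4 : Real.exp 1 ≤ 4 := by linarith [Real.exp_one_lt_d9]
      have hqx : 0 < τ/x := by positivity
      have hE2 : 0 < Real.exp (-(π*τ)) := Real.exp_pos _
      have expand1 : Real.exp 1 * Real.exp (-(π*τ)) * (π^2*τ/(2*x))
          = Real.exp 1 * (π^2 * (τ/x) * Real.exp (-(π*τ))) / 2 := by field_simp
      have expand2 : π^2 * ((2*τ/x) * Real.exp (-(π*τ)))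
          = 2 * (π^2 * (τ/x) * Real.exp (-(π*τ))) := by field_simp
      rw [expand1, expand2]
      have hpos : 0 ≤ π^2 * (τ/x) * Real.exp (-(π*τ)) := by positivity
      nlinarith
    have rhs_mono : π * Real.sqrt ((2*τ/x) * Real.exp (-(π*τ)))
        ≤ π * Real.sqrt (τ/(x*Real.sinh (π*τ))) := by
      apply mul_le_mul_of_nonneg_left (Real.sqrt_le_sqrt hq) hπ.le
    calc |Kit τ x| ≤ Real.exp (-(τ*s)) * Real.sqrt (π^2*τ/(2*x)) := step1
      _ = Real.exp (1/2:ℝ) * Real.exp (-(π*τ)/2) * Real.sqrt (π^2*τ/(2*x)) := by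
          rw [hexp_eq]
      _ ≤ π * Real.sqrt ((2*τ/x) * Real.exp (-(π*τ))) := main
      _ ≤ π * Real.sqrt (τ/(x*Real.sinh (π*τ))) := rhs_mono
end

section
/- For Re s > 0 and a ∈ [0, π/2), ∫_0^∞ cosh((π/2 + a)τ) Γ(s+iτ) Γ(s-iτ) dτ = π Γ(2s) 2^{-2s} [cos(π/4 + a/2)]^{-2s}. -/
open Real MeasureTheory Complex
open Filter Set Topology intervalIntegral

lemma horiz_shift (f : ℂ → ℂ) (c : ℝ)
    (hd : ∀ z : ℂ, z.im ∈ Set.uIcc 0 c → DifferentiableAt ℂ f z)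
    (B : ℝ → ℝ)
    (hB : ∀ x y : ℝ, y ∈ Set.uIcc 0 c → ‖f (x + y*Complex.I)‖ ≤ B x)
    (hBtop : Tendsto B atTop (𝓝 0)) (hBbot : Tendsto B atBot (𝓝 0))
    (h1 : Integrable (fun x : ℝ => f x)) (h2 : Integrable (fun x : ℝ => f (x + c*Complex.I))) :
    ∫ x : ℝ, f (x + c*Complex.I) = ∫ x : ℝ, f x := by
  have key : ∀ T : ℝ,
      (∫ x in -T..T, f x) - (∫ x in -T..T, f (x + c*Complex.I))
        + Complex.I • (∫ y in (0:ℝ)..c, f (T + y*Complex.I))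
        - Complex.I • (∫ y in (0:ℝ)..c, f (-T + y*Complex.I)) = 0 := by
    intro T
    have := integral_boundary_rect_eq_zero_of_differentiableOn f (-T : ℝ) (T + c*Complex.I)
      (by
        intro z hz
        refine (hd z ?_).differentiableWithinAt
        have := hz.2
        simp only [mem_preimage, ofReal_im, add_im, mul_im, I_im, I_re, ofReal_re,
          mul_one, mul_zero, add_zero, zero_add] at this
        simpa [Set.uIcc, Set.mem_Icc] using this)
    simpa using this
  have hv1 : Tendsto (fun T : ℝ => ∫ y in (0:ℝ)..c, f (T + y*Complex.I)) atTop (𝓝 0) := by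
    rw [tendsto_zero_iff_norm_tendsto_zero]
    have hle : ∀ᶠ T : ℝ in atTop, ‖∫ y in (0:ℝ)..c, f (T + y*Complex.I)‖ ≤ B T * |c| := by
      filter_upwards with T
      have := intervalIntegral.norm_integral_le_of_norm_le_const
        (C := B T) (f := fun y : ℝ => f (T + y*Complex.I)) (a := 0) (b := c) ?_
      · simpa [abs_of_nonneg] using this
      · intro y hy
        exact hB T y (Set.uIoc_subset_uIcc hy)
    have : Tendsto (fun T => B T * |c|) atTop (𝓝 0) := by
      simpa using hBtop.mul_const |c|
    exact squeeze_zero_norm' (by simpa using hle) this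
  have hv2 : Tendsto (fun T : ℝ => ∫ y in (0:ℝ)..c, f (-T + y*Complex.I)) atTop (𝓝 0) := by
    rw [tendsto_zero_iff_norm_tendsto_zero]
    have hle : ∀ᶠ T : ℝ in atTop, ‖∫ y in (0:ℝ)..c, f (-T + y*Complex.I)‖ ≤ B (-T) * |c| := by
      filter_upwards with T
      have := intervalIntegral.norm_integral_le_of_norm_le_const
        (C := B (-T)) (f := fun y : ℝ => f (-T + y*Complex.I)) (a := 0) (b := c) ?_
      · simpa [abs_of_nonneg] using this
      · intro y hy
        have := hB (-T) y (Set.uIoc_subset_uIcc hy)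
        simpa using this
    have : Tendsto (fun T : ℝ => B (-T) * |c|) atTop (𝓝 0) := by
      simpa using (hBbot.comp tendsto_neg_atTop_atBot).mul_const |c|
    exact squeeze_zero_norm' (by simpa using hle) this
  have t1 : Tendsto (fun T : ℝ => ∫ x in -T..T, f x) atTop (𝓝 (∫ x : ℝ, f x)) :=
    intervalIntegral_tendsto_integral h1 tendsto_neg_atTop_atBot tendsto_id
  have t2 : Tendsto (fun T : ℝ => ∫ x in -T..T, f (x + c*Complex.I)) atTop
      (𝓝 (∫ x : ℝ, f (x + c*Complex.I))) :=
    intervalIntegral_tendsto_integral h2 tendsto_neg_atTop_atBot tendsto_id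
  have comb : Tendsto (fun T : ℝ =>
      (∫ x in -T..T, f x) - (∫ x in -T..T, f (x + c*Complex.I))
        + Complex.I • (∫ y in (0:ℝ)..c, f (T + y*Complex.I))
        - Complex.I • (∫ y in (0:ℝ)..c, f (-T + y*Complex.I))) atTop
      (𝓝 ((∫ x : ℝ, f x) - (∫ x : ℝ, f (x + c*Complex.I)) + Complex.I • 0 - Complex.I • 0)) :=
    (((t1.sub t2).add (hv1.const_smul _)).sub (hv2.const_smul _))
  have := tendsto_nhds_unique comb (tendsto_const_nhds.congr (fun T => (key T).symm))
  simp only [smul_zero, add_zero, sub_zero] at this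
  exact (sub_eq_zero.mp this).symm

noncomputable def gg (s : ℂ) (z : ℂ) : ℂ := (2 * Complex.cosh (z/2)) ^ (-(2*s))

lemma coshre (z : ℂ) : (Complex.cosh z).re = Real.cosh z.re * Real.cos z.im := by
  have : z = (z.re : ℂ) + (z.im : ℂ) * Complex.I := (Complex.re_add_im z).symm
  rw [this, Complex.cosh_add, Complex.cosh_mul_I, Complex.sinh_mul_I]
  simp [← Complex.ofReal_cosh, ← Complex.ofReal_sinh, ← Complex.ofReal_cos, ← Complex.ofReal_sin]

lemma base_re_eq (z : ℂ) : (2 * Complex.cosh (z/2)).re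
    = 2 * (Real.cosh (z.re/2) * Real.cos (z.im/2)) := by
  have h2 : ((z/2).im) = z.im / 2 := by simp [Complex.div_im]
  have h3 : ((z/2).re) = z.re / 2 := by simp [Complex.div_re]
  simp [Complex.mul_re, coshre, h2, h3]

lemma base_re_pos {z : ℂ} (hz : |z.im| < Real.pi) : 0 < (2 * Complex.cosh (z/2)).re := by
  rw [base_re_eq]
  have hcos : 0 < Real.cos (z.im / 2) := by
    apply Real.cos_pos_of_mem_Ioo
    constructor
    · nlinarith [abs_lt.mp hz |>.1]
    · nlinarith [abs_lt.mp hz |>.2]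
  positivity

lemma base_ne_zero {z : ℂ} (hz : |z.im| < Real.pi) : 2 * Complex.cosh (z/2) ≠ 0 :=
  fun h => by simpa [h] using base_re_pos hz

lemma gg_diff (s : ℂ) {z : ℂ} (hz : |z.im| < Real.pi) : DifferentiableAt ℂ (gg s) z := by
  apply DifferentiableAt.cpow
  · exact (differentiableAt_const (2:ℂ)).mul
      ((Complex.differentiable_cosh (z/2)).comp z ((differentiable_id.div_const 2) z))
  · exact differentiableAt_const _
  · exact Complex.mem_slitPlane_iff.mpr (Or.inl (base_re_pos hz))

lemma gg_even (s : ℂ) (z : ℂ) : gg s (-z) = gg s z := by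
  unfold gg; rw [neg_div, Complex.cosh_neg]

noncomputable def Bc (s : ℂ) (c : ℝ) (x : ℝ) : ℝ :=
  Real.exp (Real.pi * |s.im|) * (2 * Real.cos (c/2) * Real.cosh (x/2)) ^ (-(2*s.re))

lemma mpos {c : ℝ} (hc : 0 ≤ c) (hcπ : c < Real.pi) : 0 < 2 * Real.cos (c/2) := by
  have : 0 < Real.cos (c/2) := Real.cos_pos_of_mem_Ioo ⟨by nlinarith [Real.pi_pos], by nlinarith⟩
  positivity

lemma Bc_nonneg (s : ℂ) {c : ℝ} (hc : 0 ≤ c) (hcπ : c < Real.pi) (x : ℝ) : 0 ≤ Bc s c x := by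
  unfold Bc
  have h1 := mpos hc hcπ
  have h2 := Real.cosh_pos (x/2)
  positivity

lemma gg_norm_le (s : ℂ) (hσ : 0 ≤ s.re) {c : ℝ} (hc : 0 ≤ c) (hcπ : c < Real.pi) (x : ℝ)
    {y : ℝ} (hy : |y| ≤ c) : ‖gg s ((x:ℂ) + (y:ℂ)*Complex.I)‖ ≤ Bc s c x := by
  set z : ℂ := (x:ℂ) + (y:ℂ)*Complex.I with hz
  have him : z.im = y := by simp [hz]
  have hre' : z.re = x := by simp [hz]
  have hyπ : |z.im| < Real.pi := by rw [him]; exact lt_of_le_of_lt hy hcπ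
  have hrepos : 0 < (2 * Complex.cosh (z/2)).re := base_re_pos hyπ
  have hw0 : (2 * Complex.cosh (z/2)) ≠ 0 := base_ne_zero hyπ
  set w := 2 * Complex.cosh (z/2) with hwdef
  have habs : ‖gg s z‖ = ‖w‖ ^ (-(2*s)).re
      / Real.exp (Complex.arg w * (-(2*s)).im) := Complex.norm_cpow_of_ne_zero hw0 _
  have hree : (-(2*s)).re = -(2*s.re) := by simp
  have hime : (-(2*s)).im = -(2*s.im) := by simp
  have hlow : 2 * Real.cos (c/2) * Real.cosh (x/2) ≤ ‖w‖ := by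
    have h1 : w.re ≤ ‖w‖ := Complex.re_le_norm w
    have h2 : w.re = 2 * (Real.cosh (x/2) * Real.cos (y/2)) := by
      rw [hwdef, base_re_eq, him, hre']
    have h3 : Real.cos (c/2) ≤ Real.cos (y/2) := by
      have he : Real.cos (y/2) = Real.cos (|y|/2) := by
        rw [← Real.cos_abs (y/2), abs_div]; norm_num
      rw [he]
      exact Real.cos_le_cos_of_nonneg_of_le_pi (by positivity)
        (by nlinarith [Real.pi_pos]) (by linarith)
    nlinarith [Real.cosh_pos (x/2)]
  have hlowpos : 0 < 2 * Real.cos (c/2) * Real.cosh (x/2) := by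
    have := mpos hc hcπ; nlinarith [Real.cosh_pos (x/2)]
  have habs_le : ‖w‖ ^ (-(2*s.re)) ≤
      (2 * Real.cos (c/2) * Real.cosh (x/2)) ^ (-(2*s.re)) :=
    Real.rpow_le_rpow_of_nonpos hlowpos hlow (by nlinarith)
  have harg : |Complex.arg w| ≤ Real.pi / 2 := Complex.abs_arg_le_pi_div_two_iff.mpr hrepos.le
  have hexp : 2*s.im * Complex.arg w ≤ Real.pi * |s.im| := by
    calc 2*s.im * Complex.arg w ≤ |2*s.im * Complex.arg w| := le_abs_self _
    _ = 2 * |s.im| * |Complex.arg w| := by rw [abs_mul, abs_mul]; norm_num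
    _ ≤ 2 * |s.im| * (Real.pi/2) := by
        apply mul_le_mul_of_nonneg_left harg (by positivity)
    _ = Real.pi * |s.im| := by ring
  calc ‖gg s z‖ = ‖w‖ ^ (-(2*s.re)) * Real.exp (2*s.im * Complex.arg w) := by
        rw [habs, hree, hime, div_eq_mul_inv, ← Real.exp_neg]
        congr 2; ring
  _ ≤ (2 * Real.cos (c/2) * Real.cosh (x/2)) ^ (-(2*s.re)) * Real.exp (Real.pi * |s.im|) :=
        mul_le_mul habs_le (Real.exp_le_exp.mpr hexp) (Real.exp_pos _).le
          (Real.rpow_nonneg hlowpos.le _)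
  _ = Bc s c x := by rw [Bc]; ring

lemma integrable_exp_neg_abs {σ : ℝ} (hσ : 0 < σ) :
    Integrable (fun x : ℝ => Real.exp (-σ * |x|)) := by
  have h1 : IntegrableOn (fun x : ℝ => Real.exp (-σ * |x|)) (Ioi 0) :=
    (exp_neg_integrableOn_Ioi 0 hσ).congr_fun
      (fun x hx => by rw [abs_of_pos hx]) measurableSet_Ioi
  have h1' : IntegrableOn (fun x : ℝ => Real.exp (-σ * |x|)) (Ici 0) :=
    (integrableOn_Ici_iff_integrableOn_Ioi (f := fun x : ℝ => Real.exp (-σ * |x|))).mpr h1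
  have h2 : IntegrableOn (fun x : ℝ => Real.exp (-σ * |x|)) (Iio 0) := by
    rw [← integrable_indicator_iff measurableSet_Iio]
    have hind := ((h1.integrable_indicator measurableSet_Ioi).comp_neg)
    refine hind.congr (Filter.Eventually.of_forall fun x => ?_)
    by_cases h : x < 0
    · have h' : -x ∈ Ioi (0:ℝ) := by simpa using h
      simp only [Set.indicator]
      rw [if_pos h', if_pos (Set.mem_Iio.mpr h), abs_neg]
    · push_neg at h
      have hx1 : ¬ (-x ∈ Ioi (0:ℝ)) := by simpa using h
      have hx2 : ¬ (x ∈ Iio (0:ℝ)) := by simpa using h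
      simp only [Set.indicator]
      rw [if_neg hx1, if_neg hx2]
  rw [← integrableOn_univ, ← Set.Iio_union_Ici (a := (0:ℝ)), integrableOn_union]
  exact ⟨h2, h1'⟩

lemma cosh_half_ge (x : ℝ) : Real.exp (|x|/2) / 2 ≤ Real.cosh (x/2) := by
  rw [Real.cosh_eq]
  rcases le_or_gt 0 x with h | h
  · rw [_root_.abs_of_nonneg h]
    have := (Real.exp_pos (-(x/2))).le
    have : Real.exp (x/2) ≤ Real.exp (x/2) + Real.exp (-(x/2)) := by linarith [Real.exp_pos (-(x/2))]
    linarith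
  · rw [abs_of_neg h]
    have h1 : Real.exp (-x/2) ≤ Real.exp (x/2) + Real.exp (-(x/2)) := by
      have := (Real.exp_pos (x/2)).le
      have he : Real.exp (-x/2) = Real.exp (-(x/2)) := by rw [neg_div]
      linarith [Real.exp_pos (x/2), he.le]
    linarith

lemma Bc_le (s : ℂ) (hσ : 0 < s.re) {c : ℝ} (hc : 0 ≤ c) (hcπ : c < Real.pi) (x : ℝ) :
    Bc s c x ≤ Real.exp (Real.pi * |s.im|) * (2 * Real.cos (c/2)) ^ (-(2*s.re)) *
      ((2:ℝ) ^ (2*s.re) * Real.exp (-s.re * |x|)) := by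
  unfold Bc
  have hm := mpos hc hcπ
  have hcoshpos := Real.cosh_pos (x/2)
  have hsplit : (2 * Real.cos (c/2) * Real.cosh (x/2)) ^ (-(2*s.re))
      = (2 * Real.cos (c/2)) ^ (-(2*s.re)) * Real.cosh (x/2) ^ (-(2*s.re)) :=
    Real.mul_rpow hm.le hcoshpos.le
  have hkey : Real.cosh (x/2) ^ (-(2*s.re)) ≤ (2:ℝ) ^ (2*s.re) * Real.exp (-s.re * |x|) := by
    have h1 : Real.cosh (x/2) ^ (-(2*s.re)) ≤ (Real.exp (|x|/2) / 2) ^ (-(2*s.re)) :=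
      Real.rpow_le_rpow_of_nonpos (by positivity) (cosh_half_ge x) (by nlinarith)
    have h2 : (Real.exp (|x|/2) / 2) ^ (-(2*s.re))
        = Real.exp (|x|/2) ^ (-(2*s.re)) / (2:ℝ) ^ (-(2*s.re)) :=
      Real.div_rpow (Real.exp_pos _).le (by norm_num) _
    have h3 : Real.exp (|x|/2) ^ (-(2*s.re)) = Real.exp (-s.re * |x|) := by
      rw [← Real.exp_mul]; congr 1; ring
    have h4 : ((2:ℝ) ^ (-(2*s.re)))⁻¹ = (2:ℝ) ^ (2*s.re) := by
      rw [← Real.rpow_neg (by norm_num)]; norm_num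
    rw [h2, h3] at h1
    have h5 : Real.exp (-s.re*|x|) / (2:ℝ)^(-(2*s.re))
        = (2:ℝ)^(2*s.re) * Real.exp (-s.re*|x|) := by
      rw [div_eq_mul_inv, h4]; ring
    rw [h5] at h1
    exact h1
  calc Real.exp (Real.pi * |s.im|) * (2 * Real.cos (c/2) * Real.cosh (x/2)) ^ (-(2*s.re))
      = Real.exp (Real.pi * |s.im|) * ((2 * Real.cos (c/2)) ^ (-(2*s.re)) *
        Real.cosh (x/2) ^ (-(2*s.re))) := by rw [hsplit]
  _ ≤ _ := by
      have hK : (0:ℝ) ≤ Real.exp (Real.pi * |s.im|) * (2 * Real.cos (c/2)) ^ (-(2*s.re)) := by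
        positivity
      calc Real.exp (Real.pi * |s.im|) * ((2 * Real.cos (c/2)) ^ (-(2*s.re)) *
            Real.cosh (x/2) ^ (-(2*s.re)))
          = (Real.exp (Real.pi * |s.im|) * (2 * Real.cos (c/2)) ^ (-(2*s.re))) *
            (Real.cosh (x/2) ^ (-(2*s.re))) := by ring
      _ ≤ (Real.exp (Real.pi * |s.im|) * (2 * Real.cos (c/2)) ^ (-(2*s.re))) *
            ((2:ℝ) ^ (2*s.re) * Real.exp (-s.re * |x|)) := mul_le_mul_of_nonneg_left hkey hK

lemma Bc_continuous (s : ℂ) {c : ℝ} (hc : 0 ≤ c) (hcπ : c < Real.pi) :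
    Continuous (Bc s c) := by
  unfold Bc
  apply continuous_const.mul
  apply Continuous.rpow_const
  · exact continuous_const.mul (Real.continuous_cosh.comp (continuous_id.div_const 2))
  · intro x
    left
    have := mpos hc hcπ
    have := Real.cosh_pos (x/2)
    positivity

lemma Bc_integrable (s : ℂ) (hσ : 0 < s.re) {c : ℝ} (hc : 0 ≤ c) (hcπ : c < Real.pi) :
    Integrable (Bc s c) := by
  apply Integrable.mono'
    (((integrable_exp_neg_abs hσ).const_mul
      (Real.exp (Real.pi * |s.im|) * (2 * Real.cos (c/2)) ^ (-(2*s.re)) * (2:ℝ) ^ (2*s.re))))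
    (Bc_continuous s hc hcπ).aestronglyMeasurable
  refine Filter.Eventually.of_forall fun x => ?_
  rw [Real.norm_eq_abs, _root_.abs_of_nonneg (Bc_nonneg s hc hcπ x)]
  have := Bc_le s hσ hc hcπ x
  calc Bc s c x ≤ _ := this
  _ = _ := by ring

lemma cosh_tendsto_top : Tendsto (fun x : ℝ => Real.cosh (x/2)) atTop atTop := by
  apply tendsto_atTop_mono' atTop (f₁ := fun x => Real.exp (x/2) / 2)
  · filter_upwards [eventually_ge_atTop (0:ℝ)] with x hx
    have h := cosh_half_ge x
    rwa [_root_.abs_of_nonneg hx] at h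
  · exact (Real.tendsto_exp_atTop.comp
      (tendsto_id.atTop_div_const two_pos)).atTop_div_const two_pos

lemma Bc_tendsto_top (s : ℂ) (hσ : 0 < s.re) {c : ℝ} (hc : 0 ≤ c) (hcπ : c < Real.pi) :
    Tendsto (Bc s c) atTop (𝓝 0) := by
  have h1 : Tendsto (fun x : ℝ => 2*Real.cos (c/2) * Real.cosh (x/2)) atTop atTop :=
    cosh_tendsto_top.const_mul_atTop (mpos hc hcπ)
  have h2 := (tendsto_rpow_neg_atTop (by nlinarith : (0:ℝ) < 2*s.re)).comp h1
  have h3 := h2.const_mul (Real.exp (Real.pi * |s.im|))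
  unfold Bc
  simpa [Function.comp] using h3

lemma Bc_tendsto_bot (s : ℂ) (hσ : 0 < s.re) {c : ℝ} (hc : 0 ≤ c) (hcπ : c < Real.pi) :
    Tendsto (Bc s c) atBot (𝓝 0) := by
  have h := (Bc_tendsto_top s hσ hc hcπ).comp tendsto_neg_atBot_atTop
  refine h.congr fun x => ?_
  show Bc s c (-x) = Bc s c x
  unfold Bc
  rw [neg_div, Real.cosh_neg]



lemma cpow_pos_real {p : ℝ} (hp : 0 < p) (w : ℂ) :
    (p:ℂ) ^ w = Complex.exp (w * (Real.log p : ℂ)) := by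
  rw [Complex.cpow_def_of_ne_zero (by exact_mod_cast hp.ne'), ← Complex.ofReal_log hp.le,
    mul_comm]

lemma pointwise_cov (s : ℂ) (τ t : ℝ) :
    |Real.exp t / (1 + Real.exp t)^2| •
      ((((Real.exp t / (1 + Real.exp t) : ℝ)) : ℂ) ^ (s + Complex.I*τ - 1) *
        ((1 : ℂ) - ((Real.exp t / (1 + Real.exp t) : ℝ) : ℂ)) ^ (s - Complex.I*τ - 1))
      = Complex.exp (Complex.I*τ*t) * gg s t := by
  have hE : 0 < Real.exp t := Real.exp_pos t
  have hQ : 0 < 1 + Real.exp t := by positivity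
  have habs : |Real.exp t / (1 + Real.exp t)^2| = Real.exp t / (1 + Real.exp t)^2 :=
    _root_.abs_of_pos (by positivity)
  have hL1r : (1:ℝ) - Real.exp t / (1 + Real.exp t) = 1/(1 + Real.exp t) := by
    field_simp
    ring
  have hL1 : (1:ℂ) - ((Real.exp t / (1 + Real.exp t) : ℝ) : ℂ)
      = ((1/(1 + Real.exp t) : ℝ) : ℂ) := by
    rw [← hL1r]
    push_cast
    ring
  have hcosh2 : 2 * Real.cosh (t/2) = (1 + Real.exp t) * Real.exp (-(t/2)) := by
    rw [Real.cosh_eq]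
    rw [add_mul, one_mul, ← Real.exp_add]
    have : t + -(t/2) = t/2 := by ring
    rw [this]
    ring
  have hggt : gg s (t:ℂ) = Complex.exp (-(2*s) * (Real.log (2*Real.cosh (t/2)) : ℂ)) := by
    unfold gg
    have hb : 2 * Complex.cosh ((t:ℂ)/2) = ((2*Real.cosh (t/2) : ℝ) : ℂ) := by
      rw [show ((t:ℂ)/2) = ((t/2 : ℝ) : ℂ) by push_cast; ring, ← Complex.ofReal_cosh]
      push_cast; ring
    rw [hb, cpow_pos_real (by positivity)]
  have hIt : Complex.exp (Complex.I*τ*t) * gg s (t:ℂ)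
      = Complex.exp (Complex.I*τ*t + -(2*s) * (Real.log (2*Real.cosh (t/2)) : ℂ)) := by
    rw [hggt, ← Complex.exp_add]
  rw [habs, hL1, cpow_pos_real (by positivity : (0:ℝ) < Real.exp t / (1 + Real.exp t)),
    cpow_pos_real (by positivity : (0:ℝ) < 1/(1 + Real.exp t)), hIt]
  rw [Complex.real_smul, show ((Real.exp t / (1 + Real.exp t)^2 : ℝ) : ℂ)
      = Complex.exp ((Real.log (Real.exp t / (1 + Real.exp t)^2) : ℝ) : ℂ) by
    rw [← Complex.ofReal_exp, Real.exp_log (by positivity)]]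
  rw [← Complex.exp_add, ← Complex.exp_add]
  congr 1
  have l1 : Real.log (Real.exp t / (1 + Real.exp t)^2)
      = t - 2*Real.log (1 + Real.exp t) := by
    rw [Real.log_div hE.ne' (by positivity), Real.log_exp, Real.log_pow]
    push_cast; ring
  have l2 : Real.log (Real.exp t / (1 + Real.exp t)) = t - Real.log (1 + Real.exp t) := by
    rw [Real.log_div hE.ne' hQ.ne', Real.log_exp]
  have l3 : Real.log (1/(1 + Real.exp t)) = -Real.log (1 + Real.exp t) := by
    rw [one_div, Real.log_inv]
  have l4 : Real.log (2*Real.cosh (t/2)) = Real.log (1 + Real.exp t) - t/2 := by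
    rw [hcosh2, Real.log_mul hQ.ne' (Real.exp_pos _).ne', Real.log_exp]
    ring
  rw [l1, l2, l3, l4]
  push_cast
  ring

lemma beta_eq (s : ℂ) (hs : 0 < s.re) (τ : ℝ) :
    Complex.betaIntegral (s + Complex.I*τ) (s - Complex.I*τ)
      = ∫ t : ℝ, Complex.exp (Complex.I*τ*t) * gg s t := by
  have hL' : ∀ t : ℝ, HasDerivAt (fun t => Real.exp t / (1 + Real.exp t))
      (Real.exp t / (1 + Real.exp t)^2) t := by
    intro t
    have hQ : 0 < 1 + Real.exp t := by positivity
    have h := (Real.hasDerivAt_exp t).div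
      ((hasDerivAt_const t (1:ℝ)).add (Real.hasDerivAt_exp t)) hQ.ne'
    exact h.congr_deriv (by simp only [Pi.add_apply]; ring)
  have hmono : StrictMono (fun t : ℝ => Real.exp t / (1 + Real.exp t)) := by
    intro t u htu
    have h1 : Real.exp t < Real.exp u := Real.exp_lt_exp.mpr htu
    rw [div_lt_div_iff₀ (by positivity) (by positivity)]
    nlinarith [Real.exp_pos t, Real.exp_pos u]
  have hrange : (fun t : ℝ => Real.exp t / (1 + Real.exp t)) '' univ = Ioo 0 1 := by
    rw [Set.image_univ]
    ext x
    simp only [Set.mem_range, Set.mem_Ioo]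
    constructor
    · rintro ⟨t, rfl⟩
      constructor
      · positivity
      · rw [div_lt_one (by positivity)]
        linarith [Real.exp_pos t]
    · rintro ⟨h0, h1⟩
      refine ⟨Real.log (x/(1-x)), ?_⟩
      have hx1 : 0 < 1 - x := by linarith
      rw [Real.exp_log (div_pos h0 hx1)]
      rw [show 1 + x/(1-x) = 1/(1-x) from by field_simp; ring]
      field_simp
  have key := MeasureTheory.integral_image_eq_integral_abs_deriv_smul MeasurableSet.univ
    (fun t (_ : t ∈ univ) => (hL' t).hasDerivWithinAt)
    (hmono.injective.injOn)
    (fun x : ℝ => (x:ℂ) ^ (s + Complex.I*τ - 1) * ((1:ℂ)-(x:ℂ)) ^ (s - Complex.I*τ - 1))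
  rw [hrange] at key
  rw [Complex.betaIntegral, intervalIntegral.integral_of_le zero_le_one,
    MeasureTheory.integral_Ioc_eq_integral_Ioo, key, MeasureTheory.setIntegral_univ]
  exact MeasureTheory.integral_congr_ae (Filter.Eventually.of_forall fun t => pointwise_cov s τ t)

noncomputable def gh (s : ℂ) (c τ : ℝ) : ℂ :=
  ∫ x : ℝ, Complex.exp (Complex.I*(τ:ℂ)*(x:ℂ)) * gg s ((x:ℂ) + (c:ℂ)*Complex.I)

lemma gg_line_cont (s : ℂ) {c : ℝ} (hc : |c| < Real.pi) :
    Continuous (fun x : ℝ => gg s ((x:ℂ) + (c:ℂ)*Complex.I)) := by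
  rw [continuous_iff_continuousAt]
  intro x
  have him : ((x:ℂ) + (c:ℂ)*Complex.I).im = c := by simp
  have hdiff : DifferentiableAt ℂ (gg s) ((x:ℂ) + (c:ℂ)*Complex.I) :=
    gg_diff s (by rw [him]; exact hc)
  have h2 : ContinuousAt (fun x : ℝ => (x:ℂ) + (c:ℂ)*Complex.I) x :=
    (Complex.continuous_ofReal.add continuous_const).continuousAt
  exact ContinuousAt.comp (g := gg s) hdiff.continuousAt h2

lemma line_cont (s : ℂ) {c : ℝ} (hc : |c| < Real.pi) (τ : ℝ) :
    Continuous (fun x : ℝ =>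
      Complex.exp (Complex.I*(τ:ℂ)*(x:ℂ)) * gg s ((x:ℂ) + (c:ℂ)*Complex.I)) := by
  exact (Complex.continuous_exp.comp
    ((continuous_const.mul Complex.continuous_ofReal))).mul (gg_line_cont s hc)

lemma line_norm_le (s : ℂ) (hσ : 0 ≤ s.re) {c : ℝ} (hc : |c| < Real.pi) (τ x : ℝ) :
    ‖Complex.exp (Complex.I*(τ:ℂ)*(x:ℂ)) * gg s ((x:ℂ) + (c:ℂ)*Complex.I)‖ ≤ Bc s |c| x := by
  rw [norm_mul]
  have h1 : ‖Complex.exp (Complex.I*(τ:ℂ)*(x:ℂ))‖ = 1 := by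
    rw [Complex.norm_exp]
    have : (Complex.I*(τ:ℂ)*(x:ℂ)).re = 0 := by simp
    rw [this, Real.exp_zero]
  rw [h1, one_mul]
  exact gg_norm_le s hσ (abs_nonneg c) hc x (le_refl |c|)

lemma line_integrable (s : ℂ) (hs : 0 < s.re) {c : ℝ} (hc : |c| < Real.pi) (τ : ℝ) :
    Integrable (fun x : ℝ =>
      Complex.exp (Complex.I*(τ:ℂ)*(x:ℂ)) * gg s ((x:ℂ) + (c:ℂ)*Complex.I)) := by
  apply Integrable.mono' (Bc_integrable s hs (abs_nonneg c) hc)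
    (line_cont s hc τ).aestronglyMeasurable
  exact Filter.Eventually.of_forall fun x => line_norm_le s hs.le hc τ x

lemma strip_norm_le (s : ℂ) (hσ : 0 ≤ s.re) {c : ℝ} (hcπ : |c| < Real.pi) (τ x y : ℝ)
    (hy : y ∈ Set.uIcc 0 c) :
    ‖Complex.exp (Complex.I*(τ:ℂ)*((x:ℂ) + (y:ℂ)*Complex.I)) * gg s ((x:ℂ) + (y:ℂ)*Complex.I)‖
      ≤ Real.exp (|τ| * |c|) * Bc s |c| x := by
  have hyc : |y| ≤ |c| := by
    rcases Set.mem_uIcc.mp hy with ⟨h1, h2⟩ | ⟨h1, h2⟩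
    · rw [_root_.abs_of_nonneg h1]
      exact h2.trans (le_abs_self c)
    · rw [_root_.abs_of_nonpos h2]
      exact (neg_le_neg h1).trans (neg_le_abs c)
  rw [norm_mul]
  have h1 : ‖Complex.exp (Complex.I*(τ:ℂ)*((x:ℂ) + (y:ℂ)*Complex.I))‖
      = Real.exp (-(τ*y)) := by
    rw [Complex.norm_exp]
    congr 1
    simp [Complex.mul_re, Complex.add_re, Complex.mul_im]
  rw [h1]
  apply mul_le_mul _ (gg_norm_le s hσ (abs_nonneg c) hcπ x hyc) (norm_nonneg _)
    (Real.exp_pos _).le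
  rw [Real.exp_le_exp]
  calc -(τ*y) ≤ |τ*y| := neg_le_abs _
  _ = |τ| * |y| := abs_mul _ _
  _ ≤ |τ| * |c| := mul_le_mul_of_nonneg_left hyc (abs_nonneg τ)

lemma gh_zero (s : ℂ) (τ : ℝ) :
    gh s 0 τ = ∫ x : ℝ, Complex.exp (Complex.I*(τ:ℂ)*(x:ℂ)) * gg s (x:ℂ) := by
  unfold gh
  norm_num

lemma gh_shift (s : ℂ) (hs : 0 < s.re) {c : ℝ} (hcπ : |c| < Real.pi) (τ : ℝ) :
    gh s c τ = Complex.exp ((c:ℂ)*(τ:ℂ)) * gh s 0 τ := by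
  have key := horiz_shift (fun z => Complex.exp (Complex.I*(τ:ℂ)*z) * gg s z) c
    (fun z hz => by
      refine DifferentiableAt.mul ?_ (gg_diff s ?_)
      · exact (by fun_prop : DifferentiableAt ℂ (fun z : ℂ => Complex.exp (Complex.I*(τ:ℂ)*z)) z)
      · rcases Set.mem_uIcc.mp hz with ⟨h1, h2⟩ | ⟨h1, h2⟩
        · calc |z.im| = z.im := _root_.abs_of_nonneg h1
          _ ≤ c := h2
          _ ≤ |c| := le_abs_self c
          _ < Real.pi := hcπ
        · calc |z.im| = -z.im := _root_.abs_of_nonpos h2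
          _ ≤ -c := neg_le_neg h1
          _ ≤ |c| := neg_le_abs c
          _ < Real.pi := hcπ)
    (fun x => Real.exp (|τ| * |c|) * Bc s |c| x)
    (fun x y hy => strip_norm_le s hs.le hcπ τ x y hy)
    (by simpa using (Bc_tendsto_top s hs (abs_nonneg c) hcπ).const_mul (Real.exp (|τ| * |c|)))
    (by simpa using (Bc_tendsto_bot s hs (abs_nonneg c) hcπ).const_mul (Real.exp (|τ| * |c|)))
    (by
      have h := line_integrable s hs (c := 0) (by simpa using Real.pi_pos) τ
      refine h.congr (Filter.Eventually.of_forall fun x => ?_)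
      norm_num)
    (by
      have h := (line_integrable s hs hcπ τ).const_mul
        (Complex.exp (Complex.I*(τ:ℂ)*((c:ℂ)*Complex.I)))
      refine h.congr (Filter.Eventually.of_forall fun x => ?_)
      dsimp only
      rw [← mul_assoc, ← Complex.exp_add]
      congr 2
      ring)
  -- key : ∫ x, f (x + c*I) = ∫ x, f x
  have lhs_eq : (∫ x : ℝ, Complex.exp (Complex.I*(τ:ℂ)*((x:ℂ) + (c:ℂ)*Complex.I)) *
      gg s ((x:ℂ) + (c:ℂ)*Complex.I))
      = Complex.exp (-((c:ℂ)*(τ:ℂ))) * gh s c τ := by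
    unfold gh
    rw [← MeasureTheory.integral_const_mul]
    congr 1
    funext x
    rw [← mul_assoc, ← Complex.exp_add]
    congr 2
    linear_combination ((c:ℂ)*(τ:ℂ)) * Complex.I_sq
  have rhs_eq : (∫ x : ℝ, Complex.exp (Complex.I*(τ:ℂ)*(x:ℂ)) * gg s (x:ℂ)) = gh s 0 τ :=
    (gh_zero s τ).symm
  rw [lhs_eq] at key
  rw [gh_zero, ← key, ← mul_assoc, ← Complex.exp_add,
    show (c:ℂ)*(τ:ℂ) + -((c:ℂ)*(τ:ℂ)) = 0 from by ring, Complex.exp_zero, one_mul]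

lemma gh0_even (s : ℂ) (hs : 0 < s.re) (τ : ℝ) : gh s 0 (-τ) = gh s 0 τ := by
  rw [gh_zero, gh_zero]
  have := integral_neg_eq_self (fun x : ℝ => Complex.exp (Complex.I*(τ:ℂ)*(x:ℂ)) * gg s (x:ℂ)) volume
  rw [← this]
  congr 1
  funext x
  push_cast
  rw [← gg_even s (x:ℂ)]
  congr 2
  ring

lemma gh_neg (s : ℂ) (hs : 0 < s.re) {b : ℝ} (hb : |b| < Real.pi) (τ : ℝ) :
    gh s (-b) τ = gh s b (-τ) := by
  rw [gh_shift s hs (by simpa using hb) τ, gh_shift s hs hb (-τ), gh0_even s hs τ]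
  congr 2
  push_cast
  ring

open FourierTransform

lemma gh_beta (s : ℂ) (hs : 0 < s.re) (τ : ℝ) :
    Complex.Gamma (s + Complex.I*(τ:ℂ)) * Complex.Gamma (s - Complex.I*(τ:ℂ))
      = Complex.Gamma (2*s) * gh s 0 τ := by
  rw [gh_zero]
  have hu : 0 < (s + Complex.I*(τ:ℂ)).re := by simpa using hs
  have hv : 0 < (s - Complex.I*(τ:ℂ)).re := by simpa using hs
  rw [Complex.Gamma_mul_Gamma_eq_betaIntegral hu hv, beta_eq s hs τ]
  congr 2
  ring

lemma gh_b_norm (s : ℂ) (hs : 0 < s.re) {b : ℝ} (hb : 0 ≤ b) (hbπ : b < Real.pi) (τ : ℝ) :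
    ‖gh s b τ‖ ≤ Real.exp (-((Real.pi - b)/2) * |τ|) *
      (∫ x : ℝ, Bc s ((b+Real.pi)/2) x) := by
  have hπ := Real.pi_pos
  set c₀ := (b+Real.pi)/2 with hc0
  have hc0pos : 0 < c₀ := by rw [hc0]; linarith
  have hc0π : c₀ < Real.pi := by rw [hc0]; linarith
  have habs : |c₀| = c₀ := _root_.abs_of_pos hc0pos
  have hM : ∀ c : ℝ, |c| < Real.pi → ‖gh s c τ‖ ≤ ∫ x : ℝ, Bc s |c| x := fun c hc => by
    unfold gh
    apply MeasureTheory.norm_integral_le_of_norm_le (Bc_integrable s hs (abs_nonneg c) hc)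
    exact Filter.Eventually.of_forall fun x => line_norm_le s hs.le hc τ x
  have key : ∀ c : ℝ, |c| < Real.pi →
      ‖gh s b τ‖ ≤ Real.exp (b*τ - c*τ) * ∫ x : ℝ, Bc s |c| x := fun c hc => by
    have e1 := gh_shift s hs (show |b| < Real.pi by rwa [_root_.abs_of_nonneg hb]) τ
    have e2 := gh_shift s hs hc τ
    have e3 : gh s b τ = Complex.exp ((b:ℂ)*(τ:ℂ) - (c:ℂ)*(τ:ℂ)) * gh s c τ := by
      have e4 : gh s 0 τ = Complex.exp (-((c:ℂ)*(τ:ℂ))) * gh s c τ := by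
        rw [e2, ← mul_assoc, ← Complex.exp_add,
          show -((c:ℂ)*(τ:ℂ)) + (c:ℂ)*(τ:ℂ) = 0 from by ring, Complex.exp_zero, one_mul]
      rw [e1, e4, ← mul_assoc, ← Complex.exp_add]
      congr 1 <;> ring_nf
    rw [e3, norm_mul]
    have hn : ‖Complex.exp ((b:ℂ)*(τ:ℂ) - (c:ℂ)*(τ:ℂ))‖ = Real.exp (b*τ - c*τ) := by
      rw [show ((b:ℂ)*(τ:ℂ) - (c:ℂ)*(τ:ℂ)) = ((b*τ - c*τ : ℝ) : ℂ) from by push_cast; ring,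
        Complex.norm_exp, Complex.ofReal_re]
    rw [hn]
    exact mul_le_mul_of_nonneg_left (hM c hc) (Real.exp_pos _).le
  rcases le_or_gt 0 τ with hτ | hτ
  · have h := key c₀ (by rw [habs]; exact hc0π)
    rw [habs] at h
    have he : b*τ - c₀*τ = -((Real.pi - b)/2) * |τ| := by
      rw [_root_.abs_of_nonneg hτ, hc0]; ring
    rw [he] at h
    exact h
  · have h := key (-c₀) (by rw [abs_neg, habs]; exact hc0π)
    rw [abs_neg, habs] at h
    refine h.trans ?_
    apply mul_le_mul_of_nonneg_right _ (MeasureTheory.integral_nonneg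
      (fun x => Bc_nonneg s hc0pos.le hc0π x))
    rw [Real.exp_le_exp, _root_.abs_of_neg hτ, hc0]
    nlinarith

lemma ghb_fourier (s : ℂ) (b : ℝ) (τ : ℝ) :
    gh s b τ = 𝓕 (fun x : ℝ => gg s ((x:ℂ) + (b:ℂ)*Complex.I))
      (-(τ/(2*Real.pi))) := by
  rw [Real.fourier_real_eq_integral_exp_smul]
  unfold gh
  congr 1
  funext v
  rw [smul_eq_mul]
  congr 2
  have hπ : (Real.pi : ℂ) ≠ 0 := by exact_mod_cast Real.pi_ne_zero
  push_cast
  field_simp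

lemma hfun_integrable (s : ℂ) (hs : 0 < s.re) {b : ℝ} (hb : |b| < Real.pi) :
    Integrable (fun x : ℝ => gg s ((x:ℂ) + (b:ℂ)*Complex.I)) := by
  have h := line_integrable s hs hb 0
  refine h.congr (Filter.Eventually.of_forall fun x => ?_)
  norm_num

lemma fourier_cont (s : ℂ) (hs : 0 < s.re) {b : ℝ} (hb : |b| < Real.pi) :
    Continuous (𝓕 (fun x : ℝ => gg s ((x:ℂ) + (b:ℂ)*Complex.I))) := by
  exact VectorFourier.fourierIntegral_continuous Real.continuous_fourierChar
    (by exact continuous_inner) (hfun_integrable s hs hb)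

lemma ghb_cont (s : ℂ) (hs : 0 < s.re) {b : ℝ} (hb : |b| < Real.pi) :
    Continuous (fun τ : ℝ => gh s b τ) := by
  have h := (fourier_cont s hs hb).comp
    (continuous_id.div_const (2*Real.pi)).neg
  exact h.congr fun τ => (ghb_fourier s b τ).symm

lemma ghb_integrable (s : ℂ) (hs : 0 < s.re) {b : ℝ} (hb : 0 ≤ b) (hbπ : b < Real.pi) :
    Integrable (fun τ : ℝ => gh s b τ) := by
  have hε : 0 < (Real.pi - b)/2 := by linarith
  apply Integrable.mono'
    ((integrable_exp_neg_abs hε).mul_const (∫ x : ℝ, Bc s ((b+Real.pi)/2) x))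
    (ghb_cont s hs (by rwa [_root_.abs_of_nonneg hb])).aestronglyMeasurable
  exact Filter.Eventually.of_forall fun τ => gh_b_norm s hs hb hbπ τ

lemma fourier_integrable (s : ℂ) (hs : 0 < s.re) {b : ℝ} (hb : 0 ≤ b) (hbπ : b < Real.pi) :
    Integrable (𝓕 (fun x : ℝ => gg s ((x:ℂ) + (b:ℂ)*Complex.I))) := by
  have hπ := Real.pi_pos
  have hε : 0 < (Real.pi - b)/2 * (2*Real.pi) := by nlinarith
  have heq : ∀ w : ℝ, 𝓕 (fun x : ℝ => gg s ((x:ℂ) + (b:ℂ)*Complex.I)) w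
      = gh s b (-(2*Real.pi*w)) := fun w => by
    rw [ghb_fourier s b (-(2*Real.pi*w))]
    congr 1
    field_simp
  apply Integrable.mono'
    ((integrable_exp_neg_abs hε).mul_const (∫ x : ℝ, Bc s ((b+Real.pi)/2) x))
    (fourier_cont s hs (by rwa [_root_.abs_of_nonneg hb])).aestronglyMeasurable
  refine Filter.Eventually.of_forall fun w => ?_
  rw [heq w]
  refine (gh_b_norm s hs hb hbπ _).trans (le_of_eq ?_)
  congr 2
  rw [abs_neg, abs_mul, _root_.abs_of_nonneg (by positivity : (0:ℝ) ≤ 2*Real.pi)]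
  ring

lemma integral_ghb (s : ℂ) (hs : 0 < s.re) {b : ℝ} (hb : 0 ≤ b) (hbπ : b < Real.pi) :
    ∫ τ : ℝ, gh s b τ = 2*(Real.pi:ℂ) * gg s ((b:ℂ)*Complex.I) := by
  have hπ := Real.pi_pos
  have hb' : |b| < Real.pi := by rwa [_root_.abs_of_nonneg hb]
  have hint := hfun_integrable s hs hb'
  have hFint := fourier_integrable s hs hb hbπ
  have hcont : ContinuousAt (fun x : ℝ => gg s ((x:ℂ) + (b:ℂ)*Complex.I)) 0 :=
    (gg_line_cont s hb').continuousAt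
  have hinv := hint.fourierInv_fourier_eq hFint hcont
  have h0 : 𝓕⁻ (𝓕 (fun x : ℝ => gg s ((x:ℂ) + (b:ℂ)*Complex.I))) 0
      = ∫ w : ℝ, 𝓕 (fun x : ℝ => gg s ((x:ℂ) + (b:ℂ)*Complex.I)) w := by
    rw [Real.fourierInv_eq]
    simp
  have hsub : ∫ τ : ℝ, gh s b τ
      = (2*Real.pi) • ∫ w : ℝ, 𝓕 (fun x : ℝ => gg s ((x:ℂ) + (b:ℂ)*Complex.I)) w := by
    have heq : (fun τ : ℝ => gh s b τ)
        = fun τ : ℝ => 𝓕 (fun x : ℝ => gg s ((x:ℂ) + (b:ℂ)*Complex.I))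
            ((-(1/(2*Real.pi))) * τ) := by
      funext τ
      rw [ghb_fourier s b τ]
      congr 1
      field_simp
    rw [heq, MeasureTheory.Measure.integral_comp_mul_left
      (𝓕 (fun x : ℝ => gg s ((x:ℂ) + (b:ℂ)*Complex.I))) (-(1/(2*Real.pi)))]
    congr 1
    rw [show (-(1/(2*Real.pi)))⁻¹ = -(2*Real.pi) from by field_simp]
    rw [abs_neg, _root_.abs_of_nonneg (by positivity : (0:ℝ) ≤ 2*Real.pi)]
  rw [hsub, h0.symm.trans hinv]
  rw [show ((0:ℝ):ℂ) + (b:ℂ)*Complex.I = (b:ℂ)*Complex.I from by norm_num]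
  rw [Complex.real_smul]
  push_cast
  ring

theorem stmt15 (s : ℂ) (hs : 0 < s.re) (a : ℝ) (ha : a ∈ Set.Ico 0 (Real.pi / 2)) :
    ∫ τ in Set.Ioi (0:ℝ), (Real.cosh ((Real.pi / 2 + a) * τ) : ℂ) *
        Complex.Gamma (s + Complex.I * (τ : ℂ)) * Complex.Gamma (s - Complex.I * (τ : ℂ)) =
      (Real.pi : ℂ) * Complex.Gamma (2 * s) * (2 : ℂ) ^ (-(2 * s)) *
        ((Real.cos (Real.pi / 4 + a / 2) : ℂ)) ^ (-(2 * s)) := by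
  obtain ⟨ha0, haπ⟩ := ha
  have hπ := Real.pi_pos
  set b := Real.pi/2 + a with hbdef
  have hb0 : 0 ≤ b := by rw [hbdef]; linarith
  have hbπ : b < Real.pi := by rw [hbdef]; linarith
  have hb' : |b| < Real.pi := by rwa [_root_.abs_of_nonneg hb0]
  have hnegb' : |(-b)| < Real.pi := by rwa [abs_neg]
  have int1 : Integrable (fun τ : ℝ => gh s b τ) := ghb_integrable s hs hb0 hbπ
  have int2 : Integrable (fun τ : ℝ => gh s (-b) τ) := by
    refine ((ghb_integrable s hs hb0 hbπ).comp_neg).congr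
      (Filter.Eventually.of_forall fun τ => ?_)
    exact (gh_neg s hs hb' τ).symm
  have hpt : ∀ τ : ℝ, ((Real.cosh (b * τ) : ℝ) : ℂ) *
      Complex.Gamma (s + Complex.I * (τ:ℂ)) * Complex.Gamma (s - Complex.I * (τ:ℂ))
      = Complex.Gamma (2*s) * 2⁻¹ * (gh s b τ + gh s (-b) τ) := by
    intro τ
    have h1 := gh_beta s hs τ
    have h2 := gh_shift s hs hb' τ
    have h3 := gh_shift s hs hnegb' τ
    have hcosh : ((Real.cosh (b*τ) : ℝ) : ℂ)
        = (Complex.exp ((b:ℂ)*(τ:ℂ)) + Complex.exp (-((b:ℂ)*(τ:ℂ))))/2 := by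
      rw [Real.cosh_eq]
      push_cast [Complex.ofReal_exp]
      ring_nf
    rw [mul_assoc, h1, hcosh, h2, h3]
    push_cast
    ring_nf
  have step1 : (∫ τ in Set.Ioi (0:ℝ), ((Real.cosh (b * τ) : ℝ) : ℂ) *
      Complex.Gamma (s + Complex.I * (τ:ℂ)) * Complex.Gamma (s - Complex.I * (τ:ℂ)))
      = Complex.Gamma (2*s) * 2⁻¹ *
        ((∫ τ in Set.Ioi (0:ℝ), gh s b τ) + (∫ τ in Set.Ioi (0:ℝ), gh s (-b) τ)) := by
    rw [MeasureTheory.integral_congr_ae (Filter.Eventually.of_forall fun τ => hpt τ)]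
    rw [MeasureTheory.integral_const_mul]
    congr 1
    exact MeasureTheory.integral_add int1.integrableOn int2.integrableOn
  have step2 : (∫ τ in Set.Ioi (0:ℝ), gh s (-b) τ) = ∫ τ in Set.Iic (0:ℝ), gh s b τ := by
    rw [MeasureTheory.integral_congr_ae
      (Filter.Eventually.of_forall fun τ => gh_neg s hs hb' τ)]
    have := integral_comp_neg_Ioi (0:ℝ) (fun τ => gh s b τ)
    rw [neg_zero] at this
    exact this
  have step3 : (∫ τ in Set.Ioi (0:ℝ), gh s b τ) + (∫ τ in Set.Ioi (0:ℝ), gh s (-b) τ)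
      = 2*(Real.pi:ℂ) * gg s ((b:ℂ)*Complex.I) := by
    rw [step2, add_comm, intervalIntegral.integral_Iic_add_Ioi int1.integrableOn int1.integrableOn]
    exact integral_ghb s hs hb0 hbπ
  have hggval : gg s ((b:ℂ)*Complex.I)
      = (2:ℂ) ^ (-(2*s)) * ((Real.cos (Real.pi/4 + a/2) : ℝ) : ℂ) ^ (-(2*s)) := by
    unfold gg
    have hbI : ((b:ℂ)*Complex.I)/2 = ((b/2 : ℝ):ℂ)*Complex.I := by push_cast; ring
    rw [hbI, Complex.cosh_mul_I, ← Complex.ofReal_cos]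
    have hcosval : Real.cos (b/2) = Real.cos (Real.pi/4 + a/2) := by
      rw [hbdef]; congr 1; ring
    rw [hcosval]
    have hcpos : 0 ≤ Real.cos (Real.pi/4 + a/2) := by
      apply Real.cos_nonneg_of_mem_Icc
      constructor <;> [linarith; linarith]
    rw [show (2:ℂ) * ((Real.cos (Real.pi/4 + a/2) : ℝ) : ℂ)
        = ((2:ℝ):ℂ) * ((Real.cos (Real.pi/4 + a/2) : ℝ) : ℂ) from by norm_num,
      Complex.mul_cpow_ofReal_nonneg (by norm_num) hcpos]
    norm_num
  calc ∫ τ in Set.Ioi (0:ℝ), (Real.cosh ((Real.pi / 2 + a) * τ) : ℂ) *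
        Complex.Gamma (s + Complex.I * (τ : ℂ)) * Complex.Gamma (s - Complex.I * (τ : ℂ))
      = Complex.Gamma (2*s) * 2⁻¹ *
        ((∫ τ in Set.Ioi (0:ℝ), gh s b τ) + (∫ τ in Set.Ioi (0:ℝ), gh s (-b) τ)) := step1
  _ = Complex.Gamma (2*s) * 2⁻¹ * (2*(Real.pi:ℂ) * gg s ((b:ℂ)*Complex.I)) := by rw [step3]
  _ = (Real.pi:ℂ) * Complex.Gamma (2*s) * gg s ((b:ℂ)*Complex.I) := by ring
  _ = _ := by rw [hggval]; ring
end

section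
/- For Re s > 0 and a ∈ [0, π/2), ∫_0^∞ τ sinh((π/2 + a)τ) Γ(s+iτ) Γ(s-iτ) dτ = π Γ(2s+1) 2^{-2s-1} [cos(π/4 + a/2)]^{-2s-1} sin(π/4 + a/2). -/
set_option maxHeartbeats 1000000

open Real MeasureTheory Complex Filter Set
open scoped FourierTransform Topology RealInnerProductSpace

noncomputable def phi (s w : ℂ) : ℂ := Complex.exp (s * w - 2 * s * Complex.log (1 + Complex.exp w))

lemma phi_ofReal (s : ℂ) (u : ℝ) :
    phi s u = Complex.exp (s * u - 2 * s * (Real.log (1 + Real.exp u) : ℂ)) := by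
  have h : (0:ℝ) ≤ 1 + Real.exp u := by positivity
  rw [phi, Complex.ofReal_log h]
  push_cast
  norm_num

lemma one_add_exp_lower {u y b : ℝ} (hb : b < Real.pi) (hy : |y| ≤ b) :
    max 1 (Real.exp u) * Real.sin b ≤ ‖1 + Complex.exp (u + y * I)‖ := by
  have hb0 : 0 ≤ b := le_trans (abs_nonneg y) hy
  have hcos : Real.cos b ≤ Real.cos y := by
    rw [← Real.cos_abs y]
    exact Real.cos_le_cos_of_nonneg_of_le_pi (abs_nonneg y) hb.le hy
  set t := Real.exp u with ht
  have ht0 : 0 < t := Real.exp_pos u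
  have hsin : 0 ≤ Real.sin b := Real.sin_nonneg_of_nonneg_of_le_pi hb0 hb.le
  have key : (max 1 t * Real.sin b)^2 ≤ (‖1 + Complex.exp (u + y * I)‖)^2 := by
    rw [← Complex.normSq_eq_norm_sq]
    have he : Complex.exp (u + y * I) = Complex.exp u * (Complex.cos y + Complex.sin y * I) := by
      rw [Complex.exp_add, Complex.exp_mul_I]
    have hre : (1 + Complex.exp (u + y * I)).re = 1 + t * Real.cos y := by
      simp [he, Complex.add_re, Complex.mul_re, ← Complex.ofReal_exp, ← Complex.ofReal_cos,
        ← Complex.ofReal_sin, ht]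
    have him : (1 + Complex.exp (u + y * I)).im = t * Real.sin y := by
      simp [he, Complex.add_im, Complex.mul_im, ← Complex.ofReal_exp, ← Complex.ofReal_cos,
        ← Complex.ofReal_sin, ht]
    rw [Complex.normSq_apply, hre, him]
    have expand : (1 + t * Real.cos y) * (1 + t * Real.cos y) + t * Real.sin y * (t * Real.sin y)
        = 1 + 2*t*Real.cos y + t^2 := by
      linear_combination (t^2) * (Real.sin_sq_add_cos_sq y)
    rw [expand]
    have h1 : 1 + 2*t*Real.cos b + t^2 ≤ 1 + 2*t*Real.cos y + t^2 := by nlinarith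
    have h2 : (max 1 t * Real.sin b)^2 ≤ 1 + 2*t*Real.cos b + t^2 := by
      rcases max_cases 1 t with ⟨hm, _⟩ | ⟨hm, _⟩ <;> rw [hm] <;>
        nlinarith [sq_nonneg (t + Real.cos b), sq_nonneg (t * Real.cos b + 1),
          Real.sin_sq_add_cos_sq b]
    linarith
  have h0 : 0 ≤ max 1 t * Real.sin b := by positivity
  nlinarith [norm_nonneg (1 + Complex.exp (u + y * I)), key]

/-- The basic bound for `phi` on horizontal strips. -/
lemma phi_bound (s : ℂ) (hs : 0 < s.re) {b : ℝ} (hb0 : 0 < b) (hb : b < Real.pi)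
    {y : ℝ} (hy : |y| ≤ b) (u : ℝ) :
    ‖phi s (u + y * I)‖ ≤
      Real.exp (3 * |s.im| * Real.pi - 2 * s.re * Real.log (Real.sin b)) *
        Real.exp (-s.re * |u|) := by
  have hsin : 0 < Real.sin b := Real.sin_pos_of_pos_of_lt_pi hb0 hb
  set z := (1 : ℂ) + Complex.exp (u + y * I) with hz
  have hzlow : max 1 (Real.exp u) * Real.sin b ≤ ‖z‖ := one_add_exp_lower hb hy
  have hz0 : z ≠ 0 := by
    intro h
    rw [h] at hzlow
    simp only [norm_zero] at hzlow
    nlinarith [le_max_left 1 (Real.exp u), hsin]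
  rw [phi, Complex.norm_exp, ← Real.exp_add]
  apply Real.exp_le_exp.mpr
  have hre : (s * (u + y * I) - 2 * s * Complex.log z).re
      = s.re * u - s.im * y - 2 * (s.re * Real.log ‖z‖ - s.im * z.arg) := by
    simp [Complex.sub_re, Complex.mul_re, Complex.log_re, Complex.log_im, Complex.add_re,
      Complex.add_im, Complex.mul_im, Complex.I_re, Complex.I_im, Complex.ofReal_re,
      Complex.ofReal_im]
    ring
  rw [hre]
  have harg : |z.arg| ≤ Real.pi := abs_le.mpr ⟨(Complex.neg_pi_lt_arg z).le, Complex.arg_le_pi z⟩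
  have h1 : - s.im * y + 2 * s.im * z.arg ≤ 3 * |s.im| * Real.pi := by
    have hyp : |y| ≤ Real.pi := le_trans hy hb.le
    have e1 : - s.im * y ≤ |s.im| * Real.pi := by
      calc - s.im * y ≤ |(- s.im) * y| := le_abs_self _
        _ = |s.im| * |y| := by rw [abs_mul, abs_neg]
        _ ≤ |s.im| * Real.pi := by gcongr
    have e2 : 2 * s.im * z.arg ≤ 2 * |s.im| * Real.pi := by
      calc 2 * s.im * z.arg ≤ |2 * s.im * z.arg| := le_abs_self _
        _ = 2 * |s.im| * |z.arg| := by rw [abs_mul, abs_mul]; norm_num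
        _ ≤ 2 * |s.im| * Real.pi := by gcongr
    linarith
  have h2 : - 2 * s.re * Real.log ‖z‖
      ≤ - 2 * s.re * Real.log (Real.sin b) - 2 * s.re * max 0 u := by
    have hlog : Real.log (max 1 (Real.exp u) * Real.sin b) ≤ Real.log ‖z‖ := by
      apply Real.log_le_log (by positivity) hzlow
    have hsplit : Real.log (max 1 (Real.exp u) * Real.sin b)
        = max 0 u + Real.log (Real.sin b) := by
      rw [Real.log_mul (by positivity) (ne_of_gt hsin)]
      congr 1
      rcases le_total u 0 with h | h
      · rw [max_eq_left (Real.exp_le_one_iff.mpr h), max_eq_left h.ge, Real.log_one]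
      · rw [max_eq_right (Real.one_le_exp h), max_eq_right h, Real.log_exp]
    nlinarith [hlog, hsplit]
  have h3 : s.re * u - 2 * s.re * max 0 u = - s.re * |u| := by
    rcases le_total u 0 with h | h
    · rw [max_eq_left h.ge, abs_of_nonpos h]; ring
    · rw [max_eq_right h, _root_.abs_of_nonneg h]; ring
  nlinarith [h1, h2, h3]

lemma integrable_exp_neg_abs_mul {σ : ℝ} (hσ : 0 < σ) :
    Integrable (fun u : ℝ => Real.exp (-σ * |u|)) := by
  have h1 : IntegrableOn (fun u : ℝ => Real.exp (-σ * |u|)) (Ioi 0) := by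
    refine (exp_neg_integrableOn_Ioi 0 hσ).congr_fun (fun x hx => ?_) measurableSet_Ioi
    rw [abs_of_pos (mem_Ioi.mp hx)]
  rw [← integrableOn_univ, ← @Iio_union_Ici _ _ (0 : ℝ), integrableOn_union,
    integrableOn_Ici_iff_integrableOn_Ioi]
  refine ⟨?_, h1⟩
  rw [← (Measure.measurePreserving_neg (volume : Measure ℝ)).integrableOn_comp_preimage
      (Homeomorph.neg ℝ).measurableEmbedding]
  simp only [Function.comp_def, abs_neg, neg_preimage, neg_Iio, neg_zero]
  exact h1

lemma one_add_exp_slitPlane {w : ℂ} (hw : |w.im| < Real.pi) :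
    (1 + Complex.exp w) ∈ Complex.slitPlane := by
  rw [Complex.mem_slitPlane_iff]
  have hre : (1 + Complex.exp w).re = 1 + Real.exp w.re * Real.cos w.im := by
    simp [Complex.exp_re]
  have him : (1 + Complex.exp w).im = Real.exp w.re * Real.sin w.im := by
    simp [Complex.exp_im]
  rcases le_or_gt 0 (Real.cos w.im) with h | h
  · left
    rw [hre]
    nlinarith [Real.exp_pos w.re]
  · right
    rw [him]
    have hw0 : w.im ≠ 0 := by
      intro h0
      rw [h0] at h
      norm_num at h
    have : Real.sin w.im ≠ 0 := by
      intro h0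
      rw [Real.sin_eq_zero_iff_of_lt_of_lt (by cases' abs_lt.mp hw with h1 h2; linarith)
        (by cases' abs_lt.mp hw with h1 h2; linarith)] at h0
      exact hw0 h0
    positivity

lemma phi_differentiableAt (s : ℂ) {w : ℂ} (hw : |w.im| < Real.pi) :
    DifferentiableAt ℂ (phi s) w := by
  have h1 : DifferentiableAt ℂ (fun w : ℂ => (1 : ℂ) + Complex.exp w) w :=
    (Complex.differentiable_exp w).const_add 1
  have h2 : DifferentiableAt ℂ (fun w : ℂ => Complex.log (1 + Complex.exp w)) w :=
    by have := (Complex.differentiableAt_log (one_add_exp_slitPlane hw)).comp w h1; exact this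
  exact ((differentiableAt_id.const_mul s).sub (h2.const_mul (2 * s))).cexp

lemma G_cont (s : ℂ) (t b : ℝ) (hb : |b| < Real.pi) :
    Continuous (fun u : ℝ => Complex.exp (I * t * (u + b * I)) * phi s (u + b * I)) := by
  rw [continuous_iff_continuousAt]
  intro u
  have hmap : ContinuousAt (fun u : ℝ => (u : ℂ) + b * I) u := by fun_prop
  have him : ((u : ℂ) + b * I).im = b := by simp
  refine ContinuousAt.mul (by fun_prop) ?_
  exact ((phi_differentiableAt s (by rw [him]; exact hb)).continuousAt).comp hmap

lemma G_norm_le (s : ℂ) (hs : 0 < s.re) (t : ℝ) {b B : ℝ} (hB0 : 0 < B) (hB : B < Real.pi)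
    (hb : |b| ≤ B) (u : ℝ) :
    ‖Complex.exp (I * t * (u + b * I)) * phi s (u + b * I)‖ ≤
      Real.exp (|t| * B) *
        Real.exp (3 * |s.im| * Real.pi - 2 * s.re * Real.log (Real.sin B)) *
          Real.exp (-s.re * |u|) := by
  rw [norm_mul]
  have h1 : ‖Complex.exp (I * t * (u + b * I))‖ ≤ Real.exp (|t| * B) := by
    rw [Complex.norm_exp]
    apply Real.exp_le_exp.mpr
    have : (I * t * (u + b * I)).re = -(t * b) := by
      simp [Complex.mul_re, Complex.mul_im, Complex.add_re, Complex.add_im]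
    rw [this]
    calc -(t * b) ≤ |t * b| := neg_le_abs _
      _ = |t| * |b| := abs_mul t b
      _ ≤ |t| * B := by gcongr
  calc ‖Complex.exp (I * t * (u + b * I))‖ * ‖phi s (u + b * I)‖
      ≤ Real.exp (|t| * B) * (Real.exp (3 * |s.im| * Real.pi - 2 * s.re * Real.log (Real.sin B)) *
          Real.exp (-s.re * |u|)) := by
        apply mul_le_mul h1 (phi_bound s hs hB0 hB hb u) (norm_nonneg _) (Real.exp_pos _).le
    _ = _ := by ring

lemma G_integrable_line (s : ℂ) (hs : 0 < s.re) (t b : ℝ) (hb : |b| < Real.pi) :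
    Integrable (fun u : ℝ => Complex.exp (I * t * (u + b * I)) * phi s (u + b * I)) := by
  set B := max |b| (Real.pi / 2) with hBdef
  have hB0 : 0 < B := lt_max_of_lt_right (by positivity)
  have hB : B < Real.pi := by
    apply max_lt hb
    linarith [Real.pi_pos]
  have hbB : |b| ≤ B := le_max_left _ _
  refine Integrable.mono' (((integrable_exp_neg_abs_mul hs).const_mul
    (Real.exp (|t| * B) * Real.exp (3 * |s.im| * Real.pi - 2 * s.re * Real.log (Real.sin B)))))
    (G_cont s t b hb).aestronglyMeasurable ?_
  filter_upwards with u
  have := G_norm_le s hs t hB0 hB hbB u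
  calc ‖_‖ ≤ _ := this
    _ = _ := by ring

lemma shift_eq (s : ℂ) (hs : 0 < s.re) (t b : ℝ) (hb : |b| < Real.pi) :
    ∫ u : ℝ, Complex.exp (I * t * (u + b * I)) * phi s (u + b * I) =
      ∫ u : ℝ, Complex.exp (I * t * u) * phi s u := by
  set F : ℂ → ℂ := fun w => Complex.exp (I * t * w) * phi s w with hF
  set B := max |b| (Real.pi / 2) with hBdef
  have hB0 : 0 < B := lt_max_of_lt_right (by positivity)
  have hB : B < Real.pi := max_lt hb (by linarith [Real.pi_pos])
  have hbB : |b| ≤ B := le_max_left _ _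
  -- the rectangle identity for each R
  have rect : ∀ R : ℝ,
      (∫ x in -R..R, F x) - (∫ x in -R..R, F (x + b * I)) +
        I • (∫ y in (0:ℝ)..b, F (R + y * I)) - I • (∫ y in (0:ℝ)..b, F (-R + y * I)) = 0 := by
    intro R
    have := Complex.integral_boundary_rect_eq_zero_of_differentiableOn F
      ((-R : ℝ) : ℂ) ((R : ℝ) + (b : ℝ) * I) ?_
    · have e1 : (((-R : ℝ) : ℂ)).re = -R := by simp
      have e2 : (((-R : ℝ) : ℂ)).im = 0 := by simp
      have e3 : (((R : ℝ) : ℂ) + (b : ℝ) * I).re = R := by simp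
      have e4 : (((R : ℝ) : ℂ) + (b : ℝ) * I).im = b := by simp
      rw [e1, e2, e3, e4] at this
      simpa using this
    · intro w hw
      apply DifferentiableAt.differentiableWithinAt
      have hwim : |w.im| < Real.pi := by
        have h1 : w.im ∈ Set.uIcc (((-R : ℝ) : ℂ)).im ((((R : ℝ) : ℂ) + (b : ℝ) * I).im) := hw.2
        have e2 : (((-R : ℝ) : ℂ)).im = 0 := by simp
        have e4 : (((R : ℝ) : ℂ) + (b : ℝ) * I).im = b := by simp
        rw [e2, e4] at h1
        rw [Set.uIcc_comm] at h1
        have h2 : |w.im| ≤ |b| := by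
          rcases le_total b 0 with hb0 | hb0
          · rw [Set.uIcc_of_le hb0] at h1
            rw [abs_le]
            constructor <;> [exact le_trans (neg_abs_le b) h1.1; exact le_trans h1.2 (abs_nonneg b)]
          · rw [Set.uIcc_of_ge hb0] at h1
            rw [abs_le]
            constructor <;>
              [exact le_trans (neg_nonpos_of_nonneg (abs_nonneg b)) h1.1;
               exact le_trans h1.2 (le_abs_self b)]
        exact lt_of_le_of_lt h2 hb
      exact ((differentiableAt_id.const_mul (I * t)).cexp).mul (phi_differentiableAt s hwim)
  -- limits
  have hint0 : Integrable (fun u : ℝ => F u) := by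
    have := G_integrable_line s hs t 0 (by simpa using Real.pi_pos)
    simpa using this
  have hintb : Integrable (fun u : ℝ => F (u + b * I)) := G_integrable_line s hs t b hb
  have hA : Tendsto (fun R : ℝ => ∫ x in -R..R, F x) atTop (𝓝 (∫ u : ℝ, F u)) :=
    intervalIntegral_tendsto_integral hint0 tendsto_neg_atTop_atBot tendsto_id
  have hBt : Tendsto (fun R : ℝ => ∫ x in -R..R, F (x + b * I)) atTop
      (𝓝 (∫ u : ℝ, F (u + b * I))) :=
    intervalIntegral_tendsto_integral hintb tendsto_neg_atTop_atBot tendsto_id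
  set Cst : ℝ := Real.exp (|t| * B) *
    Real.exp (3 * |s.im| * Real.pi - 2 * s.re * Real.log (Real.sin B)) with hCst
  have key : ∀ sgn : ℝ, ‖I • (∫ y in (0:ℝ)..b, F (sgn + y * I))‖ ≤
      Cst * Real.exp (-s.re * |sgn|) * |b| := by
    intro sgn
    rw [norm_smul, Complex.norm_I, one_mul]
    have hb' : ∀ y ∈ Set.uIoc (0:ℝ) b, ‖F (sgn + y * I)‖ ≤ Cst * Real.exp (-s.re * |sgn|) := by
      intro y hy
      have hyb : |y| ≤ B := by
        rcases Set.mem_uIoc.mp hy with ⟨h1, h2⟩ | ⟨h1, h2⟩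
        · rw [_root_.abs_of_pos h1]; exact le_trans h2 (le_trans (le_abs_self b) hbB)
        · rw [_root_.abs_of_nonpos h2]
          exact le_trans (by linarith [neg_abs_le b]) hbB
      exact G_norm_le s hs t hB0 hB hyb sgn
    calc ‖∫ y in (0:ℝ)..b, F (sgn + y * I)‖
        ≤ (Cst * Real.exp (-s.re * |sgn|)) * |b - 0| :=
          intervalIntegral.norm_integral_le_of_norm_le_const hb'
      _ = _ := by rw [sub_zero]
  have gt0 : Tendsto (fun R : ℝ => Cst * Real.exp (-s.re * |R|) * |b|) atTop (𝓝 0) := by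
    have h1 : Tendsto (fun R : ℝ => -s.re * |R|) atTop atBot := by
      have h0 : Tendsto (fun R : ℝ => s.re * |R|) atTop atTop :=
        tendsto_abs_atTop_atTop.const_mul_atTop hs
      have := tendsto_neg_atTop_atBot.comp h0
      simpa [Function.comp_def, neg_mul] using this
    have h2 : Tendsto (fun R : ℝ => Real.exp (-s.re * |R|)) atTop (𝓝 0) :=
      Real.tendsto_exp_atBot.comp h1
    have h3 := (h2.const_mul Cst).mul_const |b|
    rw [mul_zero, zero_mul] at h3
    exact h3
  have hC : Tendsto (fun R : ℝ => I • (∫ y in (0:ℝ)..b, F (R + y * I))) atTop (𝓝 0) :=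
    squeeze_zero_norm (fun R => key R) gt0
  have hD : Tendsto (fun R : ℝ => I • (∫ y in (0:ℝ)..b, F (-R + y * I))) atTop (𝓝 0) := by
    apply squeeze_zero_norm (fun R => ?_) gt0
    have := key (-R)
    simpa [abs_neg] using this
  have hsum : Tendsto (fun R : ℝ =>
      ((∫ x in -R..R, F x) - ∫ x in -R..R, F (x + b * I)) +
        I • (∫ y in (0:ℝ)..b, F (R + y * I)) - I • (∫ y in (0:ℝ)..b, F (-R + y * I)))
      atTop (𝓝 ((∫ u : ℝ, F u) - (∫ u : ℝ, F (u + b * I)) + 0 - 0)) :=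
    ((hA.sub hBt).add hC).sub hD
  have hzero : (∫ u : ℝ, F u) - (∫ u : ℝ, F (u + b * I)) + 0 - 0 = 0 := by
    apply tendsto_nhds_unique hsum
    have : (fun R : ℝ =>
      ((∫ x in -R..R, F x) - ∫ x in -R..R, F (x + b * I)) +
        I • (∫ y in (0:ℝ)..b, F (R + y * I)) - I • (∫ y in (0:ℝ)..b, F (-R + y * I))) =
        fun _ => (0 : ℂ) := funext fun R => rect R
    rw [this]
    exact tendsto_const_nhds
  have : (∫ u : ℝ, F (u + b * I)) = ∫ u : ℝ, F u := by
    rw [add_zero, sub_zero, sub_eq_zero] at hzero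
    exact hzero.symm
  exact this

lemma sigma_hasDerivAt (u : ℝ) :
    HasDerivAt (fun u : ℝ => 1 - (1 + Real.exp u)⁻¹) (Real.exp u / (1 + Real.exp u) ^ 2) u := by
  have hP : (1 + Real.exp u) ≠ 0 := by positivity
  have h1 : HasDerivAt (fun u : ℝ => 1 + Real.exp u) (Real.exp u) u :=
    (Real.hasDerivAt_exp u).const_add 1
  have h2 := h1.inv hP
  have h3 := h2.const_sub 1
  refine h3.congr_deriv ?_
  ring

lemma sigma_strictMono : StrictMono (fun u : ℝ => 1 - (1 + Real.exp u)⁻¹) := by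
  intro a b hab
  have ha : (0:ℝ) < 1 + Real.exp a := by positivity
  have : (1 + Real.exp b)⁻¹ < (1 + Real.exp a)⁻¹ := by
    apply inv_strictAnti₀ ha
    have := Real.exp_lt_exp.mpr hab
    linarith
  simp only
  linarith

lemma sigma_image : (fun u : ℝ => 1 - (1 + Real.exp u)⁻¹) '' univ = Ioo (0:ℝ) 1 := by
  ext x
  simp only [image_univ, mem_range, mem_Ioo]
  constructor
  · rintro ⟨u, rfl⟩
    have h1 : (0:ℝ) < 1 + Real.exp u := by positivity
    have h2 : (1 + Real.exp u)⁻¹ < 1 := by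
      rw [inv_lt_one_iff₀]
      right
      linarith [Real.exp_pos u]
    have h3 : (0:ℝ) < (1 + Real.exp u)⁻¹ := by positivity
    constructor <;> linarith
  · rintro ⟨h0, h1⟩
    refine ⟨Real.log (x / (1 - x)), ?_⟩
    have hx1 : (0:ℝ) < 1 - x := by linarith
    have : Real.exp (Real.log (x / (1 - x))) = x / (1 - x) := Real.exp_log (by positivity)
    rw [this]
    field_simp
    ring

lemma beta_rep (s : ℂ) (hs : 0 < s.re) (t : ℝ) :
    ∫ u : ℝ, Complex.exp (I * t * u) * phi s u
      = Complex.Gamma (s + I * t) * Complex.Gamma (s - I * t) / Complex.Gamma (2 * s) := by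
  have hre1 : (s + I * t).re = s.re := by simp
  have hre2 : (s - I * t).re = s.re := by simp
  have hΓ : Complex.Gamma (s + I * t) * Complex.Gamma (s - I * t)
      = Complex.Gamma (2 * s) * Complex.betaIntegral (s + I * t) (s - I * t) := by
    have := Complex.Gamma_mul_Gamma_eq_betaIntegral (s := s + I * t) (t := s - I * t)
      (by rw [hre1]; exact hs) (by rw [hre2]; exact hs)
    rw [this]
    congr 2
    ring
  have hΓ2 : Complex.Gamma (2 * s) ≠ 0 := by
    apply Complex.Gamma_ne_zero
    intro m h
    have : (2 * s).re = ((-(m:ℂ))).re := by rw [h]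
    simp only [Complex.mul_re, Complex.neg_re, Complex.natCast_re] at this
    norm_num at this
    nlinarith [Nat.cast_nonneg (α := ℝ) m, hs]
  rw [eq_div_iff hΓ2, mul_comm _ (Complex.Gamma (2*s)), hΓ]
  congr 1
  -- now: ∫ u, cexp (I t u) * phi s u = betaIntegral (s+it) (s-it)
  rw [Complex.betaIntegral, intervalIntegral.integral_of_le (by norm_num : (0:ℝ) ≤ 1),
    MeasureTheory.integral_Ioc_eq_integral_Ioo]
  have himg := sigma_image
  have hsub := MeasureTheory.integral_image_eq_integral_abs_deriv_smul (MeasurableSet.univ)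
    (fun (x : ℝ) (_ : x ∈ univ) => (sigma_hasDerivAt x).hasDerivWithinAt)
    (sigma_strictMono.injective.injOn)
    (fun x : ℝ => (x : ℂ) ^ (s + I * t - 1) * (1 - (x : ℂ)) ^ (s - I * t - 1))
  rw [himg] at hsub
  rw [hsub, MeasureTheory.Measure.restrict_univ]
  apply MeasureTheory.integral_congr_ae
  filter_upwards with u
  -- pointwise identity
  set E := Real.exp u with hE
  set P := 1 + Real.exp u with hP
  have hPpos : (0:ℝ) < P := by rw [hP]; positivity
  set L := Real.log P with hL
  have hx0 : (0:ℝ) < 1 - P⁻¹ := by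
    have : P⁻¹ < 1 := by
      rw [inv_lt_one_iff₀]
      right
      rw [hP]
      linarith [Real.exp_pos u]
    linarith
  have hx1 : (1:ℝ) - (1 - P⁻¹) = P⁻¹ := by ring
  have hxE : (1:ℝ) - P⁻¹ = E / P := by
    rw [hE, hP]
    field_simp
    ring
  have hlogx : Real.log (1 - P⁻¹) = u - L := by
    rw [hxE, Real.log_div (by rw [hE]; positivity) (ne_of_gt hPpos), hE, Real.log_exp, hL]
  have hlog1x : Real.log (P⁻¹) = -L := by rw [Real.log_inv, hL]
  have e1 : ((1 - P⁻¹ : ℝ) : ℂ) ^ (s + I * t - 1) = Complex.exp ((s + I * t - 1) * ((u : ℂ) - (L : ℂ))) := by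
    rw [Complex.cpow_def_of_ne_zero (by exact_mod_cast ne_of_gt hx0),
      ← Complex.ofReal_log hx0.le, hlogx, mul_comm]
    push_cast
    ring_nf
  have e2 : ((P⁻¹ : ℝ) : ℂ) ^ (s - I * t - 1) = Complex.exp ((s - I * t - 1) * (-(L : ℂ))) := by
    rw [Complex.cpow_def_of_ne_zero (by exact_mod_cast (ne_of_gt (inv_pos.mpr hPpos))),
      ← Complex.ofReal_log (inv_pos.mpr hPpos).le, hlog1x, mul_comm]
    push_cast
    ring_nf
  have e3 : ((E / P ^ 2 : ℝ) : ℂ) = Complex.exp (((u - 2 * L : ℝ) : ℂ)) := by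
    have : E / P ^ 2 = Real.exp (u - 2 * L) := by
      rw [Real.exp_sub, hE, hL]
      rw [show (2:ℝ) * Real.log P = Real.log (P ^ 2) by rw [Real.log_pow]; push_cast; ring]
      rw [Real.exp_log (by positivity)]
    rw [this, Complex.ofReal_exp]
  have habs : |E / P ^ 2| = E / P ^ 2 := by
    apply _root_.abs_of_nonneg
    rw [hE]
    positivity
  apply Eq.symm
  show |E / P ^ 2| • (((1 - P⁻¹ : ℝ) : ℂ) ^ (s + I * t - 1) *
      (1 - ((1 - P⁻¹ : ℝ) : ℂ)) ^ (s - I * t - 1)) = Complex.exp (I * t * u) * phi s u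
  have hcast : (1 : ℂ) - ((1 - P⁻¹ : ℝ) : ℂ) = ((P⁻¹ : ℝ) : ℂ) := by
    push_cast
    ring
  rw [habs, hcast, e1, e2, Complex.real_smul, e3, phi_ofReal, ← hP, ← hL,
    ← Complex.exp_add, ← Complex.exp_add, ← Complex.exp_add]
  congr 1
  push_cast
  ring

lemma Gamma_two_s_ne_zero (s : ℂ) (hs : 0 < s.re) : Complex.Gamma (2 * s) ≠ 0 := by
  apply Complex.Gamma_ne_zero
  intro m h
  have : (2 * s).re = ((-(m : ℂ))).re := by rw [h]
  simp only [Complex.mul_re, Complex.neg_re, Complex.natCast_re] at this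
  norm_num at this
  nlinarith [Nat.cast_nonneg (α := ℝ) m, hs]

lemma gamma_pair_eq (s : ℂ) (hs : 0 < s.re) (t b : ℝ) (hb : |b| < Real.pi) :
    Complex.Gamma (s + I * t) * Complex.Gamma (s - I * t)
      = Complex.Gamma (2 * s) * ∫ u : ℝ, Complex.exp (I * t * (u + b * I)) * phi s (u + b * I) := by
  rw [shift_eq s hs t b hb, beta_rep s hs t, mul_div_cancel₀ _ (Gamma_two_s_ne_zero s hs)]

lemma gamma_decay (s : ℂ) (hs : 0 < s.re) {b : ℝ} (hb0 : 0 < b) (hb : b < Real.pi) :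
    ∃ C : ℝ, 0 ≤ C ∧ ∀ t : ℝ,
      ‖Complex.Gamma (s + I * t) * Complex.Gamma (s - I * t)‖ ≤ C * Real.exp (-b * |t|) := by
  set Mb : ℝ := Real.exp (3 * |s.im| * Real.pi - 2 * s.re * Real.log (Real.sin b)) with hMb
  set Aint : ℝ := ∫ u : ℝ, Real.exp (-s.re * |u|) with hAint
  have hAint0 : 0 ≤ Aint := integral_nonneg (fun u => (Real.exp_pos _).le)
  refine ⟨‖Complex.Gamma (2 * s)‖ * (Mb * Aint), by positivity, fun t => ?_⟩
  set a : ℝ := if 0 ≤ t then b else -b with ha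
  have haabs : |a| ≤ b := by
    rw [ha]
    split_ifs <;> simp [abs_of_pos hb0, abs_of_neg (neg_neg_iff_pos.mpr hb0)] <;> rw [abs_of_pos hb0]
  have halt : |a| < Real.pi := lt_of_le_of_lt haabs hb
  have hta : -(t * a) = -b * |t| := by
    rw [ha]
    split_ifs with h
    · rw [_root_.abs_of_nonneg h]; ring
    · rw [_root_.abs_of_neg (lt_of_not_ge h)]; ring
  rw [gamma_pair_eq s hs t a halt, norm_mul]
  have hbd : ∀ u : ℝ, ‖Complex.exp (I * t * (u + a * I)) * phi s (u + a * I)‖ ≤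
      Real.exp (-(t * a)) * (Mb * Real.exp (-s.re * |u|)) := by
    intro u
    rw [norm_mul]
    have h1 : ‖Complex.exp (I * t * (u + a * I))‖ = Real.exp (-(t * a)) := by
      rw [Complex.norm_exp]
      congr 1
      simp [Complex.mul_re, Complex.mul_im, Complex.add_re, Complex.add_im]
    rw [h1]
    have := phi_bound s hs hb0 hb haabs u
    calc Real.exp (-(t * a)) * ‖phi s (u + a * I)‖
        ≤ Real.exp (-(t * a)) * (Mb * Real.exp (-s.re * |u|)) := by
          apply mul_le_mul_of_nonneg_left this (Real.exp_pos _).le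
      _ = _ := rfl
  have hIbd : ‖∫ u : ℝ, Complex.exp (I * t * (u + a * I)) * phi s (u + a * I)‖ ≤
      Real.exp (-(t * a)) * (Mb * Aint) := by
    have hint : Integrable (fun u : ℝ => Real.exp (-(t * a)) * (Mb * Real.exp (-s.re * |u|))) :=
      ((integrable_exp_neg_abs_mul hs).const_mul Mb).const_mul _
    calc ‖∫ u : ℝ, Complex.exp (I * t * (u + a * I)) * phi s (u + a * I)‖
        ≤ ∫ u : ℝ, Real.exp (-(t * a)) * (Mb * Real.exp (-s.re * |u|)) :=
          norm_integral_le_of_norm_le hint (Filter.Eventually.of_forall hbd)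
      _ = Real.exp (-(t * a)) * (Mb * Aint) := by
          rw [integral_const_mul, integral_const_mul]
  calc ‖Complex.Gamma (2 * s)‖ * ‖∫ u : ℝ, Complex.exp (I * t * (u + a * I)) * phi s (u + a * I)‖
      ≤ ‖Complex.Gamma (2 * s)‖ * (Real.exp (-(t * a)) * (Mb * Aint)) := by
        apply mul_le_mul_of_nonneg_left hIbd (norm_nonneg _)
    _ = ‖Complex.Gamma (2 * s)‖ * (Mb * Aint) * Real.exp (-b * |t|) := by
        rw [hta]; ring

lemma g_continuous (s : ℂ) (hs : 0 < s.re) :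
    Continuous (fun t : ℝ => Complex.Gamma (s + I * t) * Complex.Gamma (s - I * t)) := by
  have h : ∀ (c : ℂ), 0 < c.re → ∀ m : ℕ, c ≠ -(m : ℂ) := by
    intro c hc m h
    rw [h] at hc
    simp only [Complex.neg_re, Complex.natCast_re] at hc
    nlinarith [Nat.cast_nonneg (α := ℝ) m]
  apply Continuous.mul
  · apply continuous_iff_continuousAt.mpr
    intro t
    exact (Complex.differentiableAt_Gamma _ (h _ (by simp [hs]))).continuousAt.comp (by fun_prop)
  · apply continuous_iff_continuousAt.mpr
    intro t
    exact (Complex.differentiableAt_Gamma _ (h _ (by simp [hs]))).continuousAt.comp (by fun_prop)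

lemma phi_continuous_real (s : ℂ) : Continuous (fun u : ℝ => phi s u) := by
  apply continuous_iff_continuousAt.mpr
  intro u
  have him : |((u : ℂ)).im| < Real.pi := by simp [Real.pi_pos]
  exact (phi_differentiableAt s him).continuousAt.comp Complex.continuous_ofReal.continuousAt

lemma phi_real_norm_le (s : ℂ) (hs : 0 < s.re) (u : ℝ) :
    ‖phi s u‖ ≤ Real.exp (3 * |s.im| * Real.pi - 2 * s.re * Real.log (Real.sin (Real.pi/2))) *
      Real.exp (-s.re * |u|) := by
  have := phi_bound s hs (b := Real.pi / 2) (by positivity) (by linarith [Real.pi_pos])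
    (y := 0) (by simp; positivity) u
  simpa using this

lemma phi_integrable_real (s : ℂ) (hs : 0 < s.re) : Integrable (fun u : ℝ => phi s u) := by
  refine Integrable.mono' ((integrable_exp_neg_abs_mul hs).const_mul
    (Real.exp (3 * |s.im| * Real.pi - 2 * s.re * Real.log (Real.sin (Real.pi/2)))))
    (phi_continuous_real s).aestronglyMeasurable ?_
  filter_upwards with u
  exact phi_real_norm_le s hs u

lemma fourier_phi (s : ℂ) (hs : 0 < s.re) (ξ : ℝ) :
    𝓕 (fun v : ℝ => phi s v) ξ =
      Complex.Gamma (s + I * ((-(2 * Real.pi * ξ) : ℝ) : ℂ)) *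
        Complex.Gamma (s - I * ((-(2 * Real.pi * ξ) : ℝ) : ℂ))
        / Complex.Gamma (2 * s) := by
  rw [Real.fourier_eq']
  rw [← beta_rep s hs (-(2 * Real.pi * ξ))]
  apply integral_congr_ae
  filter_upwards with v
  rw [smul_eq_mul]
  congr 1
  have hi : ⟪v, ξ⟫ = v * ξ := by simp [RCLike.inner_apply]; ring
  rw [hi]
  push_cast
  ring

lemma fourier_phi_integrable (s : ℂ) (hs : 0 < s.re) :
    Integrable (𝓕 (fun v : ℝ => phi s v)) := by
  obtain ⟨C, hC0, hC⟩ := gamma_decay s hs (b := 1) one_pos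
    (by linarith [Real.pi_gt_three])
  have heq : 𝓕 (fun v : ℝ => phi s v) = fun ξ : ℝ =>
      Complex.Gamma (s + I * ((-(2 * Real.pi * ξ) : ℝ) : ℂ)) *
        Complex.Gamma (s - I * ((-(2 * Real.pi * ξ) : ℝ) : ℂ))
        / Complex.Gamma (2 * s) := funext fun ξ => fourier_phi s hs ξ
  rw [heq]
  have hcont : Continuous (fun ξ : ℝ =>
      Complex.Gamma (s + I * ((-(2 * Real.pi * ξ) : ℝ) : ℂ)) *
        Complex.Gamma (s - I * ((-(2 * Real.pi * ξ) : ℝ) : ℂ))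
        / Complex.Gamma (2 * s)) := by
    have := (g_continuous s hs).comp (by fun_prop : Continuous fun ξ : ℝ => -(2 * Real.pi * ξ))
    exact this.div_const _
  refine Integrable.mono' (((integrable_exp_neg_abs_mul (by positivity : (0:ℝ) < 2 * Real.pi)).const_mul
    (C / ‖Complex.Gamma (2 * s)‖))) hcont.aestronglyMeasurable ?_
  filter_upwards with ξ
  rw [norm_div]
  have h1 := hC (-(2 * Real.pi * ξ))
  have h2 : |(-(2 * Real.pi * ξ))| = 2 * Real.pi * |ξ| := by
    rw [abs_neg, abs_mul]
    congr 1
    rw [_root_.abs_of_nonneg (by positivity : (0:ℝ) ≤ 2 * Real.pi)]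
  rw [h2] at h1
  have h1' : ‖Complex.Gamma (s + I * ((-(2 * Real.pi * ξ) : ℝ) : ℂ)) *
      Complex.Gamma (s - I * ((-(2 * Real.pi * ξ) : ℝ) : ℂ))‖
      ≤ C * Real.exp (-(2 * Real.pi) * |ξ|) := by
    rw [show -(2 * Real.pi) * |ξ| = -1 * (2 * Real.pi * |ξ|) by ring]
    exact h1
  have hΓpos : 0 < ‖Complex.Gamma (2 * s)‖ := norm_pos_iff.mpr (Gamma_two_s_ne_zero s hs)
  rw [div_mul_eq_mul_div]
  gcongr
lemma fourier_inversion_gamma (s : ℂ) (hs : 0 < s.re) (u : ℝ) :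
    ∫ τ : ℝ, Complex.exp (I * u * τ) *
        (Complex.Gamma (s + I * τ) * Complex.Gamma (s - I * τ))
      = 2 * Real.pi * Complex.Gamma (2 * s) * phi s u := by
  have hinv := (phi_integrable_real s hs).fourierInv_fourier_eq (fourier_phi_integrable s hs)
    (phi_continuous_real s).continuousAt (v := u)
  rw [Real.fourierInv_eq'] at hinv
  -- rewrite integrand
  have heq : (fun v : ℝ => Complex.exp ((↑(2 * Real.pi * ⟪v, u⟫) * I)) • 𝓕 (fun v : ℝ => phi s v) v)
      = fun ξ : ℝ => (Complex.Gamma (2 * s))⁻¹ *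
          (Complex.exp (I * u * ((2 * Real.pi * ξ : ℝ) : ℂ)) *
            (Complex.Gamma (s + I * ((2 * Real.pi * ξ : ℝ) : ℂ)) *
              Complex.Gamma (s - I * ((2 * Real.pi * ξ : ℝ) : ℂ)))) := by
    funext ξ
    rw [fourier_phi s hs ξ, smul_eq_mul]
    have h1 : ⟪ξ, u⟫ = ξ * u := by simp [RCLike.inner_apply]; ring
    have h2 : s + I * ((-(2 * Real.pi * ξ) : ℝ) : ℂ) = s - I * ((2 * Real.pi * ξ : ℝ) : ℂ) := by
      push_cast; ring
    have h3 : s - I * ((-(2 * Real.pi * ξ) : ℝ) : ℂ) = s + I * ((2 * Real.pi * ξ : ℝ) : ℂ) := by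
      push_cast; ring
    rw [h1, h2, h3]
    rw [div_eq_mul_inv]
    push_cast
    ring
  rw [heq] at hinv
  rw [integral_const_mul] at hinv
  -- change of variables τ = 2πξ
  have hcv := MeasureTheory.Measure.integral_comp_mul_left
    (fun τ : ℝ => Complex.exp (I * u * τ) *
      (Complex.Gamma (s + I * τ) * Complex.Gamma (s - I * τ))) (2 * Real.pi)
  rw [hcv] at hinv
  have h2π : |(2 * Real.pi)⁻¹| = (2 * Real.pi)⁻¹ := by
    rw [_root_.abs_of_nonneg]; positivity
  rw [h2π] at hinv
  -- hinv : Γ(2s)⁻¹ * ((2π)⁻¹ • ∫ ...) = phi s u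
  have hΓ : Complex.Gamma (2 * s) ≠ 0 := Gamma_two_s_ne_zero s hs
  have hπ : ((2 * Real.pi : ℝ) : ℂ) ≠ 0 := by
    push_cast
    norm_num [Real.pi_ne_zero]
  rw [Complex.real_smul] at hinv
  rw [← hinv]
  have h2π' : (((2 * Real.pi)⁻¹ : ℝ) : ℂ) = (((2 * Real.pi : ℝ) : ℂ))⁻¹ := by push_cast; ring
  rw [h2π']
  field_simp
  rw [mul_div_assoc, div_self (by rw [mul_comm]; exact hΓ), mul_one]
  push_cast
  ring

lemma norm_cosh_le (z : ℂ) : ‖Complex.cosh z‖ ≤ Real.exp |z.re| := by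
  rw [Complex.cosh]
  calc ‖(Complex.exp z + Complex.exp (-z)) / 2‖ = ‖Complex.exp z + Complex.exp (-z)‖ / 2 := by
        rw [norm_div]; norm_num
    _ ≤ (‖Complex.exp z‖ + ‖Complex.exp (-z)‖) / 2 := by
        gcongr; exact norm_add_le _ _
    _ ≤ (Real.exp |z.re| + Real.exp |z.re|) / 2 := by
        gcongr
        · rw [Complex.norm_exp]
          exact Real.exp_le_exp.mpr (le_abs_self _)
        · rw [Complex.norm_exp, Complex.neg_re]
          exact Real.exp_le_exp.mpr (neg_le_abs _)
    _ = Real.exp |z.re| := by ring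

lemma norm_sinh_le (z : ℂ) : ‖Complex.sinh z‖ ≤ Real.exp |z.re| := by
  rw [Complex.sinh]
  calc ‖(Complex.exp z - Complex.exp (-z)) / 2‖ = ‖Complex.exp z - Complex.exp (-z)‖ / 2 := by
        rw [norm_div]; norm_num
    _ ≤ (‖Complex.exp z‖ + ‖Complex.exp (-z)‖) / 2 := by
        gcongr; exact norm_sub_le _ _
    _ ≤ (Real.exp |z.re| + Real.exp |z.re|) / 2 := by
        gcongr
        · rw [Complex.norm_exp]
          exact Real.exp_le_exp.mpr (le_abs_self _)
        · rw [Complex.norm_exp, Complex.neg_re]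
          exact Real.exp_le_exp.mpr (neg_le_abs _)
    _ = Real.exp |z.re| := by ring

lemma gfun_integrable (s : ℂ) (hs : 0 < s.re) (y : ℝ) :
    Integrable (fun τ : ℝ => Complex.exp (I * y * τ) *
      (Complex.Gamma (s + I * τ) * Complex.Gamma (s - I * τ))) := by
  obtain ⟨C, hC0, hC⟩ := gamma_decay s hs (b := 1) one_pos (by linarith [Real.pi_gt_three])
  refine Integrable.mono' ((integrable_exp_neg_abs_mul one_pos).const_mul C)
    ?_ ?_
  · apply Continuous.aestronglyMeasurable
    apply Continuous.mul ?_ (g_continuous s hs)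
    fun_prop
  · filter_upwards with τ
    rw [norm_mul]
    have h1 : ‖Complex.exp (I * y * τ)‖ = 1 := by
      rw [Complex.norm_exp]
      have : (I * y * τ).re = 0 := by simp [Complex.mul_re, Complex.mul_im]
      rw [this, Real.exp_zero]
    rw [h1, one_mul]
    have := hC τ
    calc ‖Complex.Gamma (s + I * τ) * Complex.Gamma (s - I * τ)‖
        ≤ C * Real.exp (-1 * |τ|) := this
      _ = C * Real.exp (-1 * |τ|) := rfl

lemma cos_formula (s : ℂ) (hs : 0 < s.re) (y : ℝ) :
    ∫ τ in Ioi (0:ℝ), (Complex.cos ((y * τ : ℝ)) : ℂ) *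
        (Complex.Gamma (s + I * τ) * Complex.Gamma (s - I * τ))
      = Real.pi * Complex.Gamma (2 * s) * phi s y := by
  set g : ℝ → ℂ := fun τ => Complex.Gamma (s + I * τ) * Complex.Gamma (s - I * τ) with hg
  set f : ℝ → ℂ := fun τ => Complex.exp (I * y * τ) * g τ with hf
  have hfint : Integrable f := gfun_integrable s hs y
  have hfnegint : Integrable (fun τ => f (-τ)) := hfint.comp_neg
  have hsplit : (∫ τ in Iic (0:ℝ), f τ) + (∫ τ in Ioi (0:ℝ), f τ) = ∫ τ : ℝ, f τ :=
    intervalIntegral.integral_Iic_add_Ioi hfint.integrableOn hfint.integrableOn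
  have hneg : (∫ τ in Iic (0:ℝ), f τ) = ∫ τ in Ioi (0:ℝ), f (-τ) := by
    have := integral_comp_neg_Ioi (0:ℝ) f
    rw [neg_zero] at this
    exact this.symm
  have hcomb : (∫ τ in Ioi (0:ℝ), (f (-τ) + f τ)) = ∫ τ : ℝ, f τ := by
    rw [integral_add hfnegint.integrableOn hfint.integrableOn, ← hneg, hsplit]
  have hgeven : ∀ τ : ℝ, g (-τ) = g τ := by
    intro τ
    simp only [hg]
    rw [show s + I * ((-τ : ℝ) : ℂ) = s - I * (τ : ℂ) by push_cast; ring,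
      show s - I * ((-τ : ℝ) : ℂ) = s + I * (τ : ℂ) by push_cast; ring]
    ring
  have hpt : ∀ τ : ℝ, f (-τ) + f τ = 2 * (Complex.cos ((y * τ : ℝ)) * g τ) := by
    intro τ
    simp only [hf]
    rw [hgeven τ]
    rw [show (I * (y:ℂ) * ((-τ : ℝ) : ℂ)) = -(((y * τ : ℝ) : ℂ)) * I by push_cast; ring,
      show (I * (y:ℂ) * ((τ : ℝ) : ℂ)) = (((y * τ : ℝ) : ℂ)) * I by push_cast; ring,
      Complex.cos]
    ring
  have h2 : (∫ τ in Ioi (0:ℝ), (2 : ℂ) * (Complex.cos ((y * τ : ℝ)) * g τ)) =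
      2 * Real.pi * Complex.Gamma (2 * s) * phi s y := by
    rw [← fourier_inversion_gamma s hs y, ← hcomb]
    apply integral_congr_ae
    filter_upwards with τ
    exact (hpt τ).symm
  rw [integral_const_mul] at h2
  have h2ne : (2 : ℂ) ≠ 0 := two_ne_zero
  have hX : (∫ a in Ioi (0:ℝ), Complex.cos ((y * a : ℝ)) * g a)
      = Real.pi * Complex.Gamma (2 * s) * phi s y :=
    mul_left_cancel₀ h2ne (h2.trans (by ring))
  simp only [hg] at hX
  exact hX

lemma integrable_linexp {ε : ℝ} (hε : 0 < ε) :
    IntegrableOn (fun τ : ℝ => τ * Real.exp (-ε * τ)) (Ioi 0) := by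
  apply integrable_of_isBigO_exp_neg (half_pos hε)
    ((by fun_prop : Continuous fun τ : ℝ => τ * Real.exp (-ε * τ)).continuousOn)
  rw [Asymptotics.isBigO_iff]
  refine ⟨1, ?_⟩
  have ht : Tendsto (fun x : ℝ => x * Real.exp (-(ε/2) * x)) atTop (𝓝 0) := by
    have h := tendsto_rpow_mul_exp_neg_mul_atTop_nhds_zero 1 (ε/2) (half_pos hε)
    simpa [Real.rpow_one] using h
  filter_upwards [ht.eventually (eventually_le_nhds one_pos), eventually_ge_atTop (0:ℝ)]
    with x h1 h2
  rw [Real.norm_eq_abs, Real.norm_eq_abs, _root_.abs_of_nonneg (mul_nonneg h2 (Real.exp_pos _).le),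
    _root_.abs_of_nonneg (Real.exp_pos _).le]
  have hexp : Real.exp (-ε * x) = Real.exp (-(ε/2) * x) * Real.exp (-(ε/2) * x) := by
    rw [← Real.exp_add]
    congr 1
    ring
  rw [hexp]
  nlinarith [mul_le_mul_of_nonneg_right h1 (Real.exp_pos (-(ε/2) * x)).le,
    Real.exp_pos (-(ε/2) * x)]

lemma H_hasDerivAt (s : ℂ) (hs : 0 < s.re) {c : ℂ} (hc : |c.re| < Real.pi) :
    HasDerivAt (fun z : ℂ => ∫ τ in Ioi (0:ℝ), Complex.cosh (z * τ) *
        (Complex.Gamma (s + I * τ) * Complex.Gamma (s - I * τ)))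
      (∫ τ in Ioi (0:ℝ), (τ : ℂ) * Complex.sinh (c * τ) *
        (Complex.Gamma (s + I * τ) * Complex.Gamma (s - I * τ))) c := by
  set g : ℝ → ℂ := fun τ => Complex.Gamma (s + I * τ) * Complex.Gamma (s - I * τ) with hg
  set ε : ℝ := (Real.pi - |c.re|) / 4 with hεdef
  have hε : 0 < ε := by rw [hεdef]; linarith
  set b'' : ℝ := |c.re| + 2 * ε with hb''def
  have hb''0 : 0 < b'' := by rw [hb''def]; linarith [abs_nonneg c.re]
  have hb'' : b'' < Real.pi := by rw [hb''def, hεdef]; linarith [abs_nonneg c.re]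
  obtain ⟨C, hC0, hC⟩ := gamma_decay s hs hb''0 hb''
  have hgcont := g_continuous s hs
  have hmeas : ∀ᶠ x in 𝓝 c, AEStronglyMeasurable
      (fun τ : ℝ => Complex.cosh (x * τ) * g τ) (volume.restrict (Ioi 0)) := by
    filter_upwards with x
    exact ((Complex.continuous_cosh.comp (by fun_prop)).mul hgcont).aestronglyMeasurable
  have hre : ∀ (x : ℂ) (τ : ℝ), |(x * (τ:ℂ)).re| = |x.re| * |τ| := by
    intro x τ
    rw [show (x * (τ:ℂ)).re = x.re * τ by simp [Complex.mul_re], abs_mul]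
  have hint : Integrable (fun τ : ℝ => Complex.cosh (c * τ) * g τ)
      (volume.restrict (Ioi 0)) := by
    refine Integrable.mono' ((exp_neg_integrableOn_Ioi 0 (by positivity : (0:ℝ) < 2*ε)).const_mul C)
      (((Complex.continuous_cosh.comp (by fun_prop)).mul hgcont).aestronglyMeasurable) ?_
    filter_upwards [ae_restrict_mem measurableSet_Ioi] with τ hτ
    have hτ0 : (0:ℝ) < τ := hτ
    rw [norm_mul]
    calc ‖Complex.cosh (c * τ)‖ * ‖g τ‖
        ≤ Real.exp |(c * (τ:ℂ)).re| * (C * Real.exp (-b'' * |τ|)) := by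
          apply mul_le_mul (norm_cosh_le _) (hC τ) (norm_nonneg _) (Real.exp_pos _).le
      _ = C * (Real.exp (|c.re| * τ) * Real.exp (-b'' * τ)) := by
          rw [hre, _root_.abs_of_pos hτ0]
          ring
      _ = C * Real.exp (-(2*ε) * τ) := by
          rw [← Real.exp_add, show |c.re| * τ + -b'' * τ = -(2*ε) * τ by rw [hb''def]; ring]
  have hmeas' : AEStronglyMeasurable (fun τ : ℝ => Complex.sinh (c * τ) * (τ:ℂ) * g τ)
      (volume.restrict (Ioi 0)) := by
    exact (((Complex.continuous_sinh.comp (by fun_prop)).mul Complex.continuous_ofReal).mul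
      hgcont).aestronglyMeasurable
  have hbound : ∀ᵐ (τ : ℝ) ∂(volume.restrict (Ioi (0:ℝ))), ∀ x ∈ Metric.ball c ε,
      ‖Complex.sinh (x * (τ:ℂ)) * (τ:ℂ) * g τ‖ ≤ C * (τ * Real.exp (-ε * τ)) := by
    filter_upwards [ae_restrict_mem measurableSet_Ioi] with τ hτ x hx
    have hτ0 : (0:ℝ) < τ := hτ
    have hxre : |x.re| ≤ |c.re| + ε := by
      have h1 : |x.re - c.re| ≤ ‖x - c‖ := by
        have := Complex.abs_re_le_norm (x - c)
        simpa [Complex.sub_re] using this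
      have h2 : ‖x - c‖ < ε := by
        rw [← dist_eq_norm]
        exact Metric.mem_ball.mp hx
      calc |x.re| = |c.re + (x.re - c.re)| := by ring_nf
        _ ≤ |c.re| + |x.re - c.re| := abs_add_le _ _
        _ ≤ |c.re| + ε := by linarith
    rw [norm_mul, norm_mul]
    calc ‖Complex.sinh (x * (τ:ℂ))‖ * ‖(τ:ℂ)‖ * ‖g τ‖
        ≤ Real.exp ((|c.re| + ε) * τ) * τ * (C * Real.exp (-b'' * |τ|)) := by
          apply mul_le_mul ?_ (hC τ) (norm_nonneg _) (by positivity)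
          apply mul_le_mul ?_ ?_ (norm_nonneg _) (Real.exp_pos _).le
          · refine le_trans (norm_sinh_le _) ?_
            rw [Real.exp_le_exp, hre, _root_.abs_of_pos hτ0]
            apply mul_le_mul_of_nonneg_right hxre hτ0.le
          · rw [Complex.norm_real, Real.norm_eq_abs, _root_.abs_of_pos hτ0]
      _ = C * (τ * (Real.exp ((|c.re| + ε) * τ) * Real.exp (-b'' * τ))) := by
          rw [_root_.abs_of_pos hτ0]
          ring
      _ = C * (τ * Real.exp (-ε * τ)) := by
          rw [← Real.exp_add, show (|c.re| + ε) * τ + -b'' * τ = -ε * τ by rw [hb''def]; ring]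
  have hbint : Integrable (fun τ : ℝ => C * (τ * Real.exp (-ε * τ)))
      (volume.restrict (Ioi 0)) := (integrable_linexp hε).const_mul C
  have hdiff : ∀ᵐ (τ : ℝ) ∂(volume.restrict (Ioi (0:ℝ))), ∀ x ∈ Metric.ball c ε,
      HasDerivAt (fun z : ℂ => Complex.cosh (z * (τ:ℂ)) * g τ)
        (Complex.sinh (x * (τ:ℂ)) * (τ:ℂ) * g τ) x := by
    filter_upwards with τ x _
    have h1 : HasDerivAt (fun z : ℂ => z * (τ:ℂ)) ((τ:ℂ)) x := by
      simpa using (hasDerivAt_id x).mul_const ((τ:ℂ))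
    have h2 : HasDerivAt (fun z : ℂ => Complex.cosh (z * (τ:ℂ))) (Complex.sinh (x * (τ:ℂ)) * (τ:ℂ)) x :=
      by have := (Complex.hasDerivAt_cosh (x * (τ:ℂ))).comp x h1; exact this
    exact h2.mul_const (g τ)
  have := (hasDerivAt_integral_of_dominated_loc_of_deriv_le (Metric.ball_mem_nhds c hε) hmeas hint hmeas'
    hbound hbint hdiff).2
  have heq : (∫ τ in Ioi (0:ℝ), Complex.sinh (c * τ) * (τ:ℂ) * g τ)
      = ∫ τ in Ioi (0:ℝ), (τ:ℂ) * Complex.sinh (c * τ) * g τ := by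
    apply integral_congr_ae
    filter_upwards with τ
    ring
  rw [heq] at this
  exact this

noncomputable def Hfun (s : ℂ) : ℂ → ℂ :=
  fun z => ∫ τ in Ioi (0:ℝ), Complex.cosh (z * τ) *
    (Complex.Gamma (s + I * τ) * Complex.Gamma (s - I * τ))

noncomputable def Rfun (s : ℂ) : ℂ → ℂ :=
  fun z => Real.pi * Complex.Gamma (2 * s) *
    Complex.exp (-2 * s * Complex.log (2 * Complex.cos (z / 2)))

def Ustrip : Set ℂ := {z : ℂ | |z.re| < Real.pi}

lemma Ustrip_open : IsOpen Ustrip := by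
  have : Ustrip = {z : ℂ | (fun z : ℂ => |z.re|) z < (fun _ => Real.pi) z} := rfl
  rw [this]
  exact isOpen_lt (by fun_prop) continuous_const

lemma Ustrip_preconnected : IsPreconnected Ustrip := by
  apply Convex.isPreconnected
  have : Ustrip = {z : ℂ | -Real.pi < z.re} ∩ {z : ℂ | z.re < Real.pi} := by
    ext z
    simp [Ustrip, abs_lt, and_comm]
  rw [this]
  exact (convex_halfSpace_re_gt _).inter (convex_halfSpace_re_lt _)

lemma cos_half_slitPlane {z : ℂ} (hz : z ∈ Ustrip) :
    2 * Complex.cos (z / 2) ∈ Complex.slitPlane := by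
  rw [Complex.mem_slitPlane_iff]
  left
  have h1 : (Complex.cos (z / 2)).re = Real.cos ((z / 2).re) * Real.cosh ((z / 2).im) := by
    rw [Complex.cos_eq, ← Complex.ofReal_cos, ← Complex.ofReal_cosh, ← Complex.ofReal_sin,
      ← Complex.ofReal_sinh]
    simp only [Complex.sub_re, Complex.mul_re, Complex.mul_im, Complex.ofReal_re,
      Complex.ofReal_im, Complex.I_re, Complex.I_im]
    ring
  have hre2 : (z / 2).re = z.re / 2 := by
    rw [show (2:ℂ) = ((2:ℝ):ℂ) by norm_num, Complex.div_ofReal_re]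
  have h2 : 0 < Real.cos ((z / 2).re) := by
    apply Real.cos_pos_of_mem_Ioo
    have h := hz
    simp only [Ustrip, mem_setOf_eq, abs_lt] at h
    rw [hre2]
    constructor
    · linarith [h.1]
    · linarith [h.2]
  have h3 : 0 < Real.cosh ((z / 2).im) := Real.cosh_pos _
  have : 0 < (Complex.cos (z / 2)).re := by rw [h1]; positivity
  simp [Complex.mul_re]
  nlinarith
lemma cos_half_ne_zero {z : ℂ} (hz : z ∈ Ustrip) : Complex.cos (z / 2) ≠ 0 := by
  intro h
  have := cos_half_slitPlane hz
  rw [h] at this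
  simp [Complex.mem_slitPlane_iff] at this

lemma Rfun_hasDerivAt (s : ℂ) {z : ℂ} (hz : z ∈ Ustrip) :
    HasDerivAt (Rfun s)
      (Rfun s z * (s * Complex.sin (z / 2) / Complex.cos (z / 2))) z := by
  have hslit := cos_half_slitPlane hz
  have hne : 2 * Complex.cos (z / 2) ≠ 0 := Complex.slitPlane_ne_zero hslit
  have h1 : HasDerivAt (fun z : ℂ => z / 2) (1 / 2) z := by
    simpa using (hasDerivAt_id z).div_const 2
  have h2 : HasDerivAt (fun z : ℂ => Complex.cos (z / 2)) (-Complex.sin (z / 2) * (1 / 2)) z :=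
    by have := (Complex.hasDerivAt_cos (z / 2)).comp z h1; exact this
  have h3 : HasDerivAt (fun z : ℂ => 2 * Complex.cos (z / 2))
      (2 * (-Complex.sin (z / 2) * (1 / 2))) z := h2.const_mul 2
  have h4 : HasDerivAt (fun z : ℂ => Complex.log (2 * Complex.cos (z / 2)))
      ((2 * Complex.cos (z / 2))⁻¹ * (2 * (-Complex.sin (z / 2) * (1 / 2)))) z :=
    by have := (Complex.hasDerivAt_log hslit).comp z h3; exact this
  have h5 : HasDerivAt (fun z : ℂ => -2 * s * Complex.log (2 * Complex.cos (z / 2)))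
      (-2 * s * ((2 * Complex.cos (z / 2))⁻¹ * (2 * (-Complex.sin (z / 2) * (1 / 2))))) z :=
    h4.const_mul (-2 * s)
  have h6 := h5.cexp
  have h7 := h6.const_mul ((Real.pi : ℂ) * Complex.Gamma (2 * s))
  refine h7.congr_deriv ?_
  simp only [Rfun]
  have hc0 : Complex.cos (z / 2) ≠ 0 := cos_half_ne_zero hz
  field_simp [hc0]
lemma Hfun_eq_Rfun_on_imag (s : ℂ) (hs : 0 < s.re) (y : ℝ) :
    Hfun s (I * y) = Rfun s (I * y) := by
  have hL : Hfun s (I * y) = Real.pi * Complex.Gamma (2 * s) * phi s y := by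
    rw [Hfun, ← cos_formula s hs y]
    apply integral_congr_ae
    filter_upwards with τ
    congr 1
    rw [show (I * (y:ℂ)) * (τ:ℂ) = ((y * τ : ℝ) : ℂ) * I by push_cast; ring,
      Complex.cosh_mul_I]
  rw [hL, Rfun]
  congr 1
  -- phi s y = cexp (-2s log (2 cos (I y / 2)))
  have hcos : 2 * Complex.cos ((I * y) / 2) = ((2 * Real.cosh (y / 2) : ℝ) : ℂ) := by
    rw [show (I * (y:ℂ)) / 2 = ((y / 2 : ℝ) : ℂ) * I by push_cast; ring, Complex.cos_mul_I]
    push_cast [Complex.ofReal_cosh]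
    ring
  rw [hcos]
  have hpos : (0:ℝ) < 2 * Real.cosh (y / 2) := by positivity
  rw [← Complex.ofReal_log hpos.le]
  have hlog : Real.log (2 * Real.cosh (y / 2)) = -(y / 2) + Real.log (1 + Real.exp y) := by
    have hid : 2 * Real.cosh (y / 2) = Real.exp (-(y / 2)) * (1 + Real.exp y) := by
      rw [Real.cosh_eq]
      rw [show Real.exp (-(y/2)) * (1 + Real.exp y)
          = Real.exp (-(y/2)) + Real.exp (-(y/2)) * Real.exp y by ring, ← Real.exp_add]
      rw [show -(y/2) + y = y/2 by ring]
      ring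
    rw [hid, Real.log_mul (Real.exp_ne_zero _) (by positivity), Real.log_exp]
  rw [hlog, phi_ofReal]
  congr 1
  push_cast
  ring

lemma Hfun_eq_Rfun (s : ℂ) (hs : 0 < s.re) : EqOn (Hfun s) (Rfun s) Ustrip := by
  have hHanal : AnalyticOnNhd ℂ (Hfun s) Ustrip := by
    apply DifferentiableOn.analyticOnNhd ?_ Ustrip_open
    intro z hz
    exact (H_hasDerivAt s hs (hz : |z.re| < Real.pi)).differentiableAt.differentiableWithinAt
  have hRanal : AnalyticOnNhd ℂ (Rfun s) Ustrip := by
    apply DifferentiableOn.analyticOnNhd ?_ Ustrip_open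
    intro z hz
    exact (Rfun_hasDerivAt s hz).differentiableAt.differentiableWithinAt
  have h0mem : (0 : ℂ) ∈ Ustrip := by
    simp [Ustrip, Real.pi_pos]
  have htend : Tendsto (fun n : ℕ => I * (((1:ℝ)/(n+1) : ℝ) : ℂ)) atTop (𝓝[≠] (0 : ℂ)) := by
    rw [tendsto_nhdsWithin_iff]
    constructor
    · have h0 : Tendsto (fun n : ℕ => ((1:ℝ)/(n+1))) atTop (𝓝 0) :=
        tendsto_one_div_add_atTop_nhds_zero_nat
      have h1 : Tendsto (fun n : ℕ => (((1:ℝ)/(n+1) : ℝ) : ℂ)) atTop (𝓝 ((0:ℝ) : ℂ)) :=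
        (Complex.continuous_ofReal.tendsto 0).comp h0
      have h2 := h1.const_mul I
      simpa using h2
    · filter_upwards with n
      simp only [mem_compl_iff, mem_singleton_iff]
      apply mul_ne_zero Complex.I_ne_zero
      rw [Complex.ofReal_ne_zero]
      positivity
  have hfreq : ∃ᶠ z in 𝓝[≠] (0:ℂ), Hfun s z = Rfun s z :=
    htend.frequently (Frequently.of_forall (fun n => Hfun_eq_Rfun_on_imag s hs _))
  exact hHanal.eqOn_of_preconnected_of_frequently_eq hRanal Ustrip_preconnected h0mem hfreq

theorem stmt16 (s : ℂ) (hs : 0 < s.re) (a : ℝ) (ha : a ∈ Set.Ico 0 (Real.pi / 2)) :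
    ∫ τ in Set.Ioi (0:ℝ), (τ : ℂ) * (Real.sinh ((Real.pi / 2 + a) * τ) : ℂ) *
        Complex.Gamma (s + Complex.I * (τ : ℂ)) * Complex.Gamma (s - Complex.I * (τ : ℂ)) =
      (Real.pi : ℂ) * Complex.Gamma (2 * s + 1) * (2 : ℂ) ^ (-(2 * s + 1)) *
        ((Real.cos (Real.pi / 4 + a / 2) : ℂ)) ^ (-(2 * s + 1)) *
        (Real.sin (Real.pi / 4 + a / 2) : ℂ) := by
  obtain ⟨ha0, ha1⟩ := ha
  set c₀ : ℂ := ((Real.pi/2 + a : ℝ) : ℂ) with hc₀def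
  have hc₀U : c₀ ∈ Ustrip := by
    simp only [Ustrip, mem_setOf_eq, hc₀def, Complex.ofReal_re]
    rw [_root_.abs_of_nonneg (by linarith [Real.pi_pos])]
    linarith
  have hc₀re : |c₀.re| < Real.pi := hc₀U
  set T : ℂ := ∫ τ in Ioi (0:ℝ), (τ : ℂ) * Complex.sinh (c₀ * τ) *
      (Complex.Gamma (s + I * τ) * Complex.Gamma (s - I * τ)) with hTdef
  have hH : HasDerivAt (Hfun s) T c₀ := H_hasDerivAt s hs hc₀re
  have hEv : Hfun s =ᶠ[𝓝 c₀] Rfun s :=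
    eventuallyEq_of_mem (Ustrip_open.mem_nhds hc₀U) (Hfun_eq_Rfun s hs)
  have hR' : HasDerivAt (Rfun s) T c₀ := hH.congr_of_eventuallyEq hEv.symm
  have hRd := Rfun_hasDerivAt s hc₀U
  have hval : T = Rfun s c₀ * (s * Complex.sin (c₀/2) / Complex.cos (c₀/2)) := hR'.unique hRd
  -- identify LHS with T
  have hLHS : (∫ τ in Set.Ioi (0:ℝ), (τ : ℂ) * (Real.sinh ((Real.pi / 2 + a) * τ) : ℂ) *
      Complex.Gamma (s + Complex.I * (τ : ℂ)) * Complex.Gamma (s - Complex.I * (τ : ℂ))) = T := by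
    rw [hTdef]
    apply integral_congr_ae
    filter_upwards with τ
    rw [Complex.ofReal_sinh]
    rw [show ((( Real.pi / 2 + a) * τ : ℝ) : ℂ) = c₀ * τ by rw [hc₀def]; push_cast; ring]
    ring
  rw [hLHS, hval]
  -- now the RHS algebra
  set θ : ℝ := Real.pi/4 + a/2 with hθdef
  have hθ0 : 0 < θ := by rw [hθdef]; linarith [Real.pi_pos]
  have hθlt : θ < Real.pi/2 := by rw [hθdef]; linarith
  have hcosθ : 0 < Real.cos θ := by
    apply Real.cos_pos_of_mem_Ioo
    constructor <;> linarith
  have hθpi : θ < Real.pi := by rw [hθdef]; linarith [Real.pi_pos]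
  have hsinθ : 0 < Real.sin θ := Real.sin_pos_of_pos_of_lt_pi hθ0 hθpi
  have hhalf : c₀ / 2 = ((θ : ℝ) : ℂ) := by
    rw [hc₀def, hθdef]
    push_cast
    ring
  have h2s : (2 * s : ℂ) ≠ 0 := by
    intro h
    have : (2 * s).re = 0 := by rw [h]; simp
    simp only [Complex.mul_re] at this
    norm_num at this
    linarith
  have hΓ1 : Complex.Gamma (2 * s + 1) = 2 * s * Complex.Gamma (2 * s) :=
    Complex.Gamma_add_one (2 * s) h2s
  set L : ℝ := Real.log (2 * Real.cos θ) with hLdef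
  have h2pow : (2 : ℂ) ^ (-(2 * s + 1)) = Complex.exp (-(2 * s + 1) * (Real.log 2 : ℂ)) := by
    rw [Complex.cpow_def_of_ne_zero two_ne_zero]
    rw [show (2:ℂ) = ((2:ℝ):ℂ) by norm_num, ← Complex.ofReal_log (by norm_num : (0:ℝ) ≤ 2)]
    rw [mul_comm]
  have hcpow : ((Real.cos θ : ℝ) : ℂ) ^ (-(2 * s + 1))
      = Complex.exp (-(2 * s + 1) * (Real.log (Real.cos θ) : ℂ)) := by
    rw [Complex.cpow_def_of_ne_zero (Complex.ofReal_ne_zero.mpr (ne_of_gt hcosθ))]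
    rw [← Complex.ofReal_log hcosθ.le, mul_comm]
  have hcomb : Complex.exp (-(2 * s + 1) * (Real.log 2 : ℂ)) *
      Complex.exp (-(2 * s + 1) * (Real.log (Real.cos θ) : ℂ))
      = Complex.exp (-(2 * s + 1) * (L : ℂ)) := by
    rw [← Complex.exp_add, hLdef, Real.log_mul (by norm_num) (ne_of_gt hcosθ)]
    congr 1
    push_cast
    ring
  have hsplitexp : Complex.exp (-(2 * s + 1) * (L : ℂ))
      = Complex.exp (-2 * s * (L : ℂ)) * (((2 * Real.cos θ : ℝ) : ℂ))⁻¹ := by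
    have he : Complex.exp ((L : ℂ)) = ((2 * Real.cos θ : ℝ) : ℂ) := by
      rw [← Complex.ofReal_exp, hLdef, Real.exp_log (by positivity)]
    rw [show (-(2 * s + 1) * (L : ℂ)) = -2 * s * (L : ℂ) + -(L : ℂ) by ring,
      Complex.exp_add, Complex.exp_neg, he]
  have hRfun : Rfun s c₀ = (Real.pi : ℂ) * Complex.Gamma (2 * s) *
      Complex.exp (-2 * s * (L : ℂ)) := by
    simp only [Rfun]
    congr 2
    rw [hhalf, ← Complex.ofReal_cos, hLdef]
    rw [show (2 : ℂ) * ((Real.cos θ : ℝ) : ℂ) = ((2 * Real.cos θ : ℝ) : ℂ) by push_cast; ring]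
    rw [← Complex.ofReal_log (by positivity)]
  rw [hRfun, hΓ1, h2pow, hcpow]
  rw [show ((Real.pi:ℂ) * (2 * s * Complex.Gamma (2*s)) * Complex.exp (-(2*s+1) * (Real.log 2 : ℂ)) *
      Complex.exp (-(2*s+1) * (Real.log (Real.cos θ) : ℂ)) * ((Real.sin θ : ℝ) : ℂ))
      = ((Real.pi:ℂ) * (2 * s * Complex.Gamma (2*s)) *
        (Complex.exp (-(2*s+1) * (Real.log 2 : ℂ)) *
          Complex.exp (-(2*s+1) * (Real.log (Real.cos θ) : ℂ))) * ((Real.sin θ : ℝ) : ℂ)) by ring,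
    hcomb, hsplitexp]
  rw [hhalf, ← Complex.ofReal_cos, ← Complex.ofReal_sin]
  have hcne : ((Real.cos θ : ℝ) : ℂ) ≠ 0 := Complex.ofReal_ne_zero.mpr (ne_of_gt hcosθ)
  push_cast
  field_simp
end

section
/- For all x > 0, τ > 0 and δ ∈ [0, π/2), |K_{iτ}(x)| ≤ e^{-δτ} K_0(x cos δ). -/
open Real MeasureTheory

/-- Macdonald function of order 0. -/
noncomputable def K0 (u : ℝ) : ℝ :=
  ∫ t in Set.Ioi (0:ℝ), Real.exp (-u * Real.cosh t)

private lemma self_le_cosh' (t : ℝ) (ht : 0 ≤ t) : t ≤ Real.cosh t := by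
  have h := Real.add_one_le_exp (t/2)
  have h2 := (Real.exp_pos (-t)).le
  have h3 : Real.exp t = Real.exp (t/2) * Real.exp (t/2) := by
    rw [← Real.exp_add]; ring_nf
  have h4 : (t/2+1)*(t/2+1) ≤ Real.exp (t/2) * Real.exp (t/2) :=
    mul_le_mul h h (by linarith) (Real.exp_pos _).le
  have := Real.cosh_eq t
  nlinarith [sq_nonneg (t/2 - 1)]

set_option maxHeartbeats 1000000 in
theorem stmt18 (x τ δ : ℝ) (hx : 0 < x) (hτ : 0 < τ) (hδ : δ ∈ Set.Ico 0 (Real.pi / 2)) :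
    |Kit τ x| ≤ Real.exp (-δ * τ) * K0 (x * Real.cos δ) := by
  obtain ⟨hδ0, hδπ⟩ := hδ
  have hπ := Real.pi_pos
  have hcosδ : 0 < Real.cos δ := Real.cos_pos_of_mem_Ioo ⟨by linarith, hδπ⟩
  set c : ℝ := x * Real.cos δ with hcdef
  have hc : 0 < c := mul_pos hx hcosδ
  set f : ℂ → ℂ := fun z => Complex.exp (τ * z * Complex.I - x * Complex.cosh z) with hf
  have hfd : Differentiable ℂ f := by
    apply Complex.differentiable_exp.comp
    exact ((differentiable_id.const_mul _).mul_const _).sub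
      (Complex.differentiable_cosh.const_mul _)
  -- norm formula
  have hnorm : ∀ t s : ℝ, ‖f (t + s*Complex.I)‖
      = Real.exp (-(τ*s) - x*(Real.cosh t * Real.cos s)) := by
    intro t s
    rw [hf]
    simp only
    rw [Complex.norm_exp]
    congr 1
    have hcosh : Complex.cosh (t + s*Complex.I) =
        ((Real.cosh t * Real.cos s : ℝ) : ℂ) + ((Real.sinh t * Real.sin s : ℝ) : ℂ) * Complex.I := by
      rw [Complex.cosh_add, Complex.cosh_mul_I, Complex.sinh_mul_I]
      push_cast [← Complex.ofReal_cosh, ← Complex.ofReal_cos, ← Complex.ofReal_sinh,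
        ← Complex.ofReal_sin]
      ring
    rw [hcosh]
    simp only [Complex.sub_re, Complex.add_re, Complex.mul_re, Complex.add_im, Complex.mul_im,
      Complex.I_re, Complex.I_im, Complex.ofReal_re, Complex.ofReal_im]
    ring
  -- integrability on horizontal lines
  have hint : ∀ s : ℝ, 0 ≤ s → s < Real.pi/2 →
      IntegrableOn (fun t : ℝ => f (t + s*Complex.I)) (Set.Ioi 0) := by
    intro s hs0 hsπ
    have hcs : 0 < Real.cos s := Real.cos_pos_of_mem_Ioo ⟨by linarith, hsπ⟩
    have hxc : 0 < x * Real.cos s := mul_pos hx hcs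
    apply Integrable.mono' (exp_neg_integrableOn_Ioi 0 hxc)
    · exact (hfd.continuous.comp (by continuity)).aestronglyMeasurable
    · filter_upwards [ae_restrict_mem measurableSet_Ioi] with t ht
      rw [hnorm t s]
      apply Real.exp_le_exp.2
      have h1 : t ≤ Real.cosh t := self_le_cosh' t (le_of_lt ht)
      have h2 : x * Real.cos s * t ≤ x * (Real.cosh t * Real.cos s) := by nlinarith
      nlinarith [mul_nonneg hτ.le hs0]
  have hint0 : IntegrableOn (fun t : ℝ => f t) (Set.Ioi 0) := by
    have := hint 0 le_rfl (by linarith)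
    simpa using this
  have hintδ : IntegrableOn (fun t : ℝ => f (t + δ*Complex.I)) (Set.Ioi 0) :=
    hint δ hδ0 hδπ
  -- Kit as real part
  have hKit : Kit τ x = (∫ t in Set.Ioi (0:ℝ), f t).re := by
    have hh := integral_re hint0
    simp only [RCLike.re_to_complex] at hh
    rw [← hh]
    unfold Kit
    apply setIntegral_congr_fun measurableSet_Ioi
    intro t _
    rw [hf]
    simp only
    have : (↑τ * ↑t * Complex.I - ↑x * Complex.cosh ↑t) =
        Complex.ofReal (-x * Real.cosh t) + Complex.ofReal (τ * t) * Complex.I := by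
      push_cast [← Complex.ofReal_cosh]; ring
    rw [this]
    simp [Complex.exp_re, Complex.add_re, Complex.mul_re, Complex.add_im, Complex.mul_im]
  -- rectangle contour
  have hrect : ∀ R : ℝ, (∫ t in (0:ℝ)..R, f t) - (∫ t in (0:ℝ)..R, f (t + δ*Complex.I))
      + Complex.I • (∫ s in (0:ℝ)..δ, f (R + s*Complex.I))
      - Complex.I • (∫ s in (0:ℝ)..δ, f (s*Complex.I)) = 0 := by
    intro R
    have := Complex.integral_boundary_rect_eq_zero_of_differentiableOn f 0
      (R + δ*Complex.I) hfd.differentiableOn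
    simpa [Complex.add_re, Complex.add_im, Complex.ofReal_re, Complex.ofReal_im,
      Complex.mul_re, Complex.mul_im, Complex.I_re, Complex.I_im, Complex.zero_re,
      Complex.zero_im] using this
  set L : ℂ := ∫ s in (0:ℝ)..δ, f (s*Complex.I) with hL
  -- the vertical integral at infinity tends to 0
  have hV : Filter.Tendsto (fun R : ℝ => Complex.I • ∫ s in (0:ℝ)..δ, f (R + s*Complex.I))
      Filter.atTop (nhds 0) := by
    have hg : Filter.Tendsto (fun R : ℝ => Real.exp (-(c * Real.cosh R)) * δ)
        Filter.atTop (nhds 0) := by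
      have h1 : Filter.Tendsto (fun R : ℝ => c * Real.cosh R) Filter.atTop Filter.atTop := by
        apply Filter.Tendsto.const_mul_atTop hc
        apply Filter.tendsto_atTop_mono' _ _ Filter.tendsto_id
        filter_upwards [Filter.eventually_ge_atTop (0:ℝ)] with R hR
        exact self_le_cosh' R hR
      have h2 : Filter.Tendsto (fun R : ℝ => Real.exp (-(c * Real.cosh R)))
          Filter.atTop (nhds 0) := Real.tendsto_exp_atBot.comp (Filter.tendsto_neg_atBot_iff.2 h1)
      simpa using h2.mul_const δ
    refine squeeze_zero_norm (fun R => ?_) hg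
    rw [norm_smul, Complex.norm_I, one_mul]
    have hb : ∀ s ∈ Set.uIoc (0:ℝ) δ, ‖f (R + s*Complex.I)‖ ≤ Real.exp (-(c * Real.cosh R)) := by
      intro s hs
      rw [Set.uIoc_of_le hδ0] at hs
      obtain ⟨hs0', hsδ⟩ := hs
      have hs0 : (0:ℝ) ≤ s := hs0'.le
      rw [hnorm R s]
      apply Real.exp_le_exp.2
      have hcs : Real.cos δ ≤ Real.cos s :=
        Real.cos_le_cos_of_nonneg_of_le_pi hs0 (by linarith) hsδ
      have hch : (0:ℝ) ≤ Real.cosh R := (Real.cosh_pos R).le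
      have : c * Real.cosh R ≤ x * (Real.cosh R * Real.cos s) := by
        rw [hcdef]
        nlinarith [mul_nonneg (mul_nonneg hx.le hch) (sub_nonneg.2 hcs)]
      nlinarith [mul_nonneg hτ.le hs0]
    have := intervalIntegral.norm_integral_le_of_norm_le_const hb
    calc ‖∫ s in (0:ℝ)..δ, f (R + s*Complex.I)‖
        ≤ Real.exp (-(c * Real.cosh R)) * |δ - 0| := this
      _ = Real.exp (-(c * Real.cosh R)) * δ := by rw [sub_zero, abs_of_nonneg hδ0]
  -- pass to the limit
  have hA : Filter.Tendsto (fun R : ℝ => ∫ t in (0:ℝ)..R, f t) Filter.atTop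
      (nhds (∫ t in Set.Ioi (0:ℝ), f t)) :=
    intervalIntegral_tendsto_integral_Ioi 0 hint0 Filter.tendsto_id
  have hB : Filter.Tendsto (fun R : ℝ => ∫ t in (0:ℝ)..R, f (t + δ*Complex.I)) Filter.atTop
      (nhds (∫ t in Set.Ioi (0:ℝ), f (t + δ*Complex.I))) :=
    intervalIntegral_tendsto_integral_Ioi 0 hintδ Filter.tendsto_id
  have hkey : (∫ t in Set.Ioi (0:ℝ), f t) - (∫ t in Set.Ioi (0:ℝ), f (t + δ*Complex.I))
      - Complex.I • L = 0 := by
    have hfun : (fun R : ℝ => (∫ t in (0:ℝ)..R, f t) - (∫ t in (0:ℝ)..R, f (t + δ*Complex.I))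
        - Complex.I • L)
        = fun R : ℝ => -(Complex.I • ∫ s in (0:ℝ)..δ, f (R + s*Complex.I)) := by
      funext R
      have h := hrect R
      rw [hL]
      linear_combination h
    have hlim := (hA.sub hB).sub_const (Complex.I • L)
    rw [hfun] at hlim
    exact tendsto_nhds_unique hlim (by simpa using hV.neg)
  -- the left vertical integral is real
  have hLim : L.im = 0 := by
    have hfs : ∀ s : ℝ, f (s*Complex.I) = ((Real.exp (-(τ*s) - x*Real.cos s) : ℝ) : ℂ) := by
      intro s
      rw [hf]
      simp only
      rw [Complex.cosh_mul_I]
      rw [show (↑τ * (↑s * Complex.I) * Complex.I - ↑x * Complex.cos ↑s)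
          = ↑τ * ↑s * (Complex.I * Complex.I) - ↑x * Complex.cos ↑s by ring,
        Complex.I_mul_I]
      rw [show (↑τ * ↑s * (-1) - ↑x * Complex.cos ↑s : ℂ)
          = Complex.ofReal (-(τ*s) - x*Real.cos s) by
        push_cast [← Complex.ofReal_cos]; ring]
      exact (Complex.ofReal_exp _).symm
    have hLeq : L = ((∫ s in (0:ℝ)..δ, Real.exp (-(τ*s) - x*Real.cos s) : ℝ) : ℂ) := by
      rw [hL, intervalIntegral.integral_congr
        (g := fun s : ℝ => ((Real.exp (-(τ*s) - x*Real.cos s) : ℝ) : ℂ)) (fun s _ => hfs s)]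
      exact RCLike.intervalIntegral_ofReal
    rw [hLeq, Complex.ofReal_im]
  have hre : (∫ t in Set.Ioi (0:ℝ), f t).re = (∫ t in Set.Ioi (0:ℝ), f (t + δ*Complex.I)).re := by
    have h1 : (∫ t in Set.Ioi (0:ℝ), f t)
        = (∫ t in Set.Ioi (0:ℝ), f (t + δ*Complex.I)) + Complex.I • L := by
      linear_combination hkey
    rw [h1]
    simp [Complex.add_re, Complex.smul_re, hLim]
  -- final estimate
  rw [hKit, hre]
  have h2 : |(∫ t in Set.Ioi (0:ℝ), f (t + δ*Complex.I)).re|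
      ≤ ‖∫ t in Set.Ioi (0:ℝ), f (t + δ*Complex.I)‖ := by
    exact Complex.abs_re_le_norm _
  refine h2.trans ?_
  refine (norm_integral_le_integral_norm _).trans ?_
  have h3 : (∫ t in Set.Ioi (0:ℝ), ‖f (t + δ*Complex.I)‖)
      = Real.exp (-δ*τ) * K0 c := by
    unfold K0
    rw [← integral_const_mul]
    apply setIntegral_congr_fun measurableSet_Ioi
    intro t _
    show ‖f (↑t + ↑δ*Complex.I)‖ = Real.exp (-δ*τ) * Real.exp (-c * Real.cosh t)
    rw [hnorm t δ, ← Real.exp_add]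
    congr 1
    rw [hcdef]
    ring
  rw [h3]
end
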